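/- arXiv:1012.3843 — 6 statements merged into one kernel-verified Lean document; each statement's English description precedes it below -/
import Mathlib

section
/- Let λ > 0 and let P₀, P₁, P₂ be three distinct points in ℤ² each of Euclidean norm λ, with |P₀ - P₁| ≤ |P₀ - P₂|. Then |P₀ - P₂|² · |P₀ - P₁| > c·λ for some absolute constant c > 0 (one may take c = 1/2 after checking the area argument; it suffices to prove |P₀ - P₂|² · |P₀ - P₁| ≥ λ/2 under the additional harmless assumption |P₀-P₂| ≤ λ). -/
noncomputable def toC (p : ℤ × ℤ) : ℂ := (p.1 : ℂ) + (p.2 : ℂ) * Complex.I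

lemma toC_re (p : ℤ × ℤ) : (toC p).re = (p.1 : ℝ) := by simp [toC]
lemma toC_im (p : ℤ × ℤ) : (toC p).im = (p.2 : ℝ) := by simp [toC]

lemma abs_sq_toC (p : ℤ × ℤ) :
    (‖toC p‖) ^ 2 = (p.1 : ℝ) ^ 2 + (p.2 : ℝ) ^ 2 := by
  rw [Complex.sq_norm, Complex.normSq_apply, toC_re, toC_im]; ring

lemma abs_sq_toC_sub (p q : ℤ × ℤ) :
    (‖toC p - toC q‖) ^ 2 =
      ((p.1 : ℝ) - q.1) ^ 2 + ((p.2 : ℝ) - q.2) ^ 2 := by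
  rw [Complex.sq_norm, Complex.normSq_apply, Complex.sub_re, Complex.sub_im,
    toC_re, toC_im, toC_re, toC_im]; ring

lemma toC_inj {p q : ℤ × ℤ} (h : toC p = toC q) : p = q := by
  have hre := congrArg Complex.re h
  have him := congrArg Complex.im h
  rw [toC_re, toC_re] at hre
  rw [toC_im, toC_im] at him
  have h1 : p.1 = q.1 := by exact_mod_cast hre
  have h2 : p.2 = q.2 := by exact_mod_cast him
  exact Prod.ext h1 h2

set_option maxHeartbeats 1000000 in
theorem stmt_0 (lam : ℝ) (hlam : 0 < lam) (P₀ P₁ P₂ : ℤ × ℤ)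
    (h0 : ‖toC P₀‖ = lam)
    (h1 : ‖toC P₁‖ = lam)
    (h2 : ‖toC P₂‖ = lam)
    (hne01 : P₀ ≠ P₁) (hne02 : P₀ ≠ P₂) (hne12 : P₁ ≠ P₂)
    (hord : ‖toC P₀ - toC P₁‖ ≤ ‖toC P₀ - toC P₂‖)
    (hsmall : ‖toC P₀ - toC P₂‖ ≤ lam) :
    lam / 2 ≤ (‖toC P₀ - toC P₂‖) ^ 2 * ‖toC P₀ - toC P₁‖ := by
  set x0 : ℝ := (P₀.1 : ℝ) with hx0
  set y0 : ℝ := (P₀.2 : ℝ) with hy0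
  set x1 : ℝ := (P₁.1 : ℝ) with hx1
  set y1 : ℝ := (P₁.2 : ℝ) with hy1
  set x2 : ℝ := (P₂.1 : ℝ) with hx2
  set y2 : ℝ := (P₂.2 : ℝ) with hy2
  set r1 : ℝ := ‖toC P₀ - toC P₁‖ with hr1def
  set r2 : ℝ := ‖toC P₀ - toC P₂‖ with hr2def
  set r3 : ℝ := ‖toC P₁ - toC P₂‖ with hr3def
  have hr1 : r1 ^ 2 = (x0 - x1) ^ 2 + (y0 - y1) ^ 2 := abs_sq_toC_sub P₀ P₁
  have hr2 : r2 ^ 2 = (x0 - x2) ^ 2 + (y0 - y2) ^ 2 := abs_sq_toC_sub P₀ P₂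
  have hr3 : r3 ^ 2 = (x1 - x2) ^ 2 + (y1 - y2) ^ 2 := abs_sq_toC_sub P₁ P₂
  have hL0 : x0 ^ 2 + y0 ^ 2 = lam ^ 2 := by
    rw [← abs_sq_toC P₀, h0]
  have hL1 : x1 ^ 2 + y1 ^ 2 = x0 ^ 2 + y0 ^ 2 := by
    rw [← abs_sq_toC P₀, ← abs_sq_toC P₁, h0, h1]
  have hL2 : x2 ^ 2 + y2 ^ 2 = x0 ^ 2 + y0 ^ 2 := by
    rw [← abs_sq_toC P₀, ← abs_sq_toC P₂, h0, h2]
  set D : ℤ := (P₁.1 - P₀.1) * (P₂.2 - P₀.2) - (P₂.1 - P₀.1) * (P₁.2 - P₀.2) with hDdef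
  have hDcast : (D : ℝ) = (x1 - x0) * (y2 - y0) - (x2 - x0) * (y1 - y0) := by
    rw [hDdef]; push_cast; ring
  -- key identity: 4 λ² D² = r1² r2² r3²
  have key : 4 * lam ^ 2 * (D : ℝ) ^ 2 = r1 ^ 2 * r2 ^ 2 * r3 ^ 2 := by
    rw [hDcast, hr1, hr2, hr3, ← hL0]
    linear_combination
      ((-1)*y2^4 + (-2)*x2^2*y2^2 + (-1)*x2^4 + (2)*y1*y2^3 + (2)*y1*x2^2*y2 +
        (-1)*y1^2*y2^2 + (-1)*y1^2*x2^2 + (2)*x1*x2*y2^2 + (2)*x1*x2^3 +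
        (-1)*x1^2*y2^2 + (-1)*x1^2*x2^2 + (2)*y0*y2^3 + (2)*y0*x2^2*y2 +
        (-2)*y0*y1*y2^2 + (2)*y0*y1*x2^2 + (2)*y0*y1^2*y2 + (-4)*y0*x1*x2*y2 +
        (2)*y0*x1^2*y2 + (1)*y0^2*y2^2 + (-3)*y0^2*x2^2 + (-2)*y0^2*y1*y2 +
        (-1)*y0^2*y1^2 + (2)*y0^2*x1*x2 + (-1)*y0^2*x1^2 + (-4)*y0^3*y2 +
        (2)*y0^3*y1 + (2)*y0^4 + (-2)*x0*x2*y2^2 + (-2)*x0*x2^3 +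
        (-4)*x0*y1*x2*y2 + (2)*x0*y1^2*x2 + (2)*x0*x1*y2^2 + (-2)*x0*x1*x2^2 +
        (2)*x0*x1^2*x2 + (8)*x0*y0*x2*y2 + (-4)*x0*y0*y1*x2 + (-4)*x0*y0*x1*y2 +
        (2)*x0*y0^2*x1 + (1)*x0^2*y2^2 + (5)*x0^2*x2^2 + (2)*x0^2*y1*y2 +
        (-1)*x0^2*y1^2 + (-2)*x0^2*x1*x2 + (-1)*x0^2*x1^2 + (-4)*x0^2*y0*y2 +
        (2)*x0^2*y0*y1 + (2)*x0^3*x1 + (-2)*x0^4) * hL1 +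
      ((2)*y0*y1*y2^2 + (2)*y0*y1*x2^2 + (-4)*y0*y1^2*y2 + (-4)*y0*x1*y1*x2 +
        (-2)*y0^2*y2^2 + (-2)*y0^2*x2^2 + (4)*y0^2*y1^2 + (4)*y0^2*x1*x2 +
        (4)*y0^3*y2 + (-2)*y0^3*y1 + (-2)*y0^4 + (4)*x0*y1^2*x2 + (2)*x0*x1*y2^2 +
        (2)*x0*x1*x2^2 + (-4)*x0*x1*y1*y2 + (-4)*x0*y0*y1*x2 + (-4)*x0*y0*x1*y2 +
        (8)*x0*y0*x1*y1 + (-2)*x0*y0^2*x1 + (-2)*x0^2*y2^2 + (-2)*x0^2*x2^2 +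
        (4)*x0^2*y1*y2 + (-4)*x0^2*y1^2 + (4)*x0^2*y0*y2 + (-2)*x0^2*y0*y1 +
        (-2)*x0^3*x1 + (2)*x0^4) * hL2
  have hr1pos : 0 < r1 := by
    rw [hr1def]
    refine (norm_pos_iff.mpr ?_)
    intro h
    exact hne01 (toC_inj (sub_eq_zero.mp h))
  have hr2pos : 0 < r2 := by
    rw [hr2def]
    refine (norm_pos_iff.mpr ?_)
    intro h
    exact hne02 (toC_inj (sub_eq_zero.mp h))
  have hr3pos : 0 < r3 := by
    rw [hr3def]
    refine (norm_pos_iff.mpr ?_)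
    intro h
    exact hne12 (toC_inj (sub_eq_zero.mp h))
  have hDne : D ≠ 0 := by
    intro h
    have hpos : 0 < r1 ^ 2 * r2 ^ 2 * r3 ^ 2 := by positivity
    rw [← key, h] at hpos
    norm_num at hpos
  have hD1 : (1 : ℝ) ≤ (D : ℝ) ^ 2 := by
    have hpos : 0 < D ^ 2 := (sq_nonneg D).lt_of_ne (Ne.symm (pow_ne_zero 2 hDne))
    have h1 : (0 : ℤ) + 1 ≤ D ^ 2 := Int.lt_iff_add_one_le.mp hpos
    have : (1 : ℤ) ≤ D ^ 2 := by linarith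
    exact_mod_cast this
  -- triangle inequality: r3 ≤ r1 + r2 ≤ 2 r2
  have htri : r3 ≤ r1 + r2 := by
    rw [hr1def, hr2def, hr3def]
    calc ‖toC P₁ - toC P₂‖
        = ‖(toC P₁ - toC P₀) + (toC P₀ - toC P₂)‖ := by ring_nf
      _ ≤ ‖toC P₁ - toC P₀‖ + ‖toC P₀ - toC P₂‖ :=
          norm_add_le _ _
      _ = ‖toC P₀ - toC P₁‖ + ‖toC P₀ - toC P₂‖ := by
          rw [← norm_neg (toC P₁ - toC P₀)]; ring_nf
  have hr3le : r3 ≤ 2 * r2 := by linarith [hord]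
  have h4 : 4 * lam ^ 2 ≤ r1 ^ 2 * r2 ^ 2 * r3 ^ 2 := by
    have h' : 4 * lam ^ 2 * 1 ≤ 4 * lam ^ 2 * (D : ℝ) ^ 2 := by
      have : (0 : ℝ) ≤ 4 * lam ^ 2 := by positivity
      exact mul_le_mul_of_nonneg_left hD1 this
    rw [key] at h'
    linarith
  have hr3sq : r3 ^ 2 ≤ (2 * r2) ^ 2 := by
    have := pow_le_pow_left₀ (le_of_lt hr3pos) hr3le 2
    exact this
  have h5 : r1 ^ 2 * r2 ^ 2 * r3 ^ 2 ≤ r1 ^ 2 * r2 ^ 2 * (2 * r2) ^ 2 := by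
    have : (0 : ℝ) ≤ r1 ^ 2 * r2 ^ 2 := by positivity
    exact mul_le_mul_of_nonneg_left hr3sq this
  have heq : r1 ^ 2 * r2 ^ 2 * (2 * r2) ^ 2 = 4 * (r2 ^ 2 * r1) ^ 2 := by ring
  have h6 : lam ^ 2 ≤ (r2 ^ 2 * r1) ^ 2 := by linarith
  have h7 : lam ≤ r2 ^ 2 * r1 := by
    have hs := Real.sqrt_le_sqrt h6
    rwa [Real.sqrt_sq hlam.le, Real.sqrt_sq (by positivity)] at hs
  linarith
end

section
/- Let λ > 0 and let P₀, P₁, Q₀, Q₁ be four distinct points of ℤ², each of norm λ, all lying on a circular arc of {|x| = λ} of length r. Then |P₀ - Q₀| · |P₁ - Q₁| · r > c·λ for some absolute constant c > 0. -/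
lemma toC_sub (p q : ℤ × ℤ) : toC (p - q) = toC p - toC q := by
  simp [toC]
  ring

lemma toC_inj_s1 : Function.Injective toC := by
  intro p q h
  simp [toC, Complex.ext_iff] at h
  exact Prod.ext (by exact_mod_cast h.1) (by exact_mod_cast h.2)

lemma one_le_abs_toC {p : ℤ × ℤ} (hp : p ≠ 0) : 1 ≤ ‖toC p‖ := by
  have h1 : (1 : ℤ) ≤ p.1 ^ 2 + p.2 ^ 2 := by
    rcases eq_or_ne p.1 0 with h | h
    · have h2 : p.2 ≠ 0 := fun h2 => hp (Prod.ext h h2)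
      nlinarith [Int.one_le_abs h2, sq_abs p.2, sq_nonneg p.1, abs_nonneg p.2]
    · nlinarith [Int.one_le_abs h, sq_abs p.1, sq_nonneg p.2, abs_nonneg p.1]
  have h1' : (1:ℝ) ≤ (p.1:ℝ)^2 + (p.2:ℝ)^2 := by exact_mod_cast h1
  have h2 : (1 : ℝ) ≤ Complex.normSq (toC p) := by
    simp [toC, Complex.normSq_apply]
    nlinarith [h1']
  nlinarith [Complex.sq_norm (toC p), norm_nonneg (toC p), h2]

lemma im_conj_toC (p q : ℤ × ℤ) :
    ((starRingEnd ℂ) (toC p) * toC q).im = ((p.1 * q.2 - p.2 * q.1 : ℤ) : ℝ) := by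
  simp [toC, Complex.mul_im]
  push_cast
  ring

lemma exp_aux (m h : ℝ) :
    Complex.exp (((m + h : ℝ) : ℂ) * Complex.I) - Complex.exp (((m - h : ℝ) : ℂ) * Complex.I)
      = 2 * Complex.I * ((Real.sin h : ℝ) : ℂ) * Complex.exp ((m : ℂ) * Complex.I) := by
  apply Complex.ext <;>
    simp only [Complex.sub_re, Complex.sub_im, Complex.mul_re, Complex.mul_im,
      Complex.exp_ofReal_mul_I_re, Complex.exp_ofReal_mul_I_im, Complex.I_re, Complex.I_im,
      Complex.ofReal_re, Complex.ofReal_im, Complex.re_ofNat, Complex.im_ofNat] <;>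
    simp only [Real.cos_add, Real.cos_sub, Real.sin_add, Real.sin_sub] <;> ring

lemma exp_sub_exp (a b : ℝ) :
    Complex.exp ((a : ℂ) * Complex.I) - Complex.exp ((b : ℂ) * Complex.I)
      = 2 * Complex.I * ((Real.sin ((a - b) / 2) : ℝ) : ℂ) *
        Complex.exp ((((a + b) / 2 : ℝ) : ℂ) * Complex.I) := by
  have h := exp_aux ((a + b) / 2) ((a - b) / 2)
  rw [show (a + b) / 2 + (a - b) / 2 = a by ring, show (a + b) / 2 - (a - b) / 2 = b by ring] at h
  exact h

lemma abs_exp_sub_exp (a b : ℝ) :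
    ‖Complex.exp ((a : ℂ) * Complex.I) - Complex.exp ((b : ℂ) * Complex.I)‖
      = 2 * |Real.sin ((a - b) / 2)| := by
  rw [exp_sub_exp]
  simp only [norm_mul, Complex.norm_two, Complex.norm_I, Complex.norm_real, Real.norm_eq_abs,
    Complex.norm_exp_ofReal_mul_I]
  ring

lemma conj_key (sA sB S T : ℝ) :
    (starRingEnd ℂ) (2 * Complex.I * ((sA : ℝ) : ℂ) * Complex.exp ((S : ℂ) * Complex.I)) *
      (2 * Complex.I * ((sB : ℝ) : ℂ) * Complex.exp ((T : ℂ) * Complex.I))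
      = (((4 * sA * sB : ℝ)) : ℂ) * Complex.exp (((T - S : ℝ) : ℂ) * Complex.I) := by
  simp only [map_mul, Complex.conj_I, Complex.conj_ofReal, map_ofNat, ← Complex.exp_conj]
  rw [show (S:ℂ) * -Complex.I = -((S:ℂ) * Complex.I) by ring, Complex.exp_neg]
  rw [Complex.ofReal_sub, sub_mul, Complex.exp_sub]
  have hE := Complex.exp_ne_zero ((S : ℂ) * Complex.I)
  field_simp
  push_cast
  linear_combination (-(4:ℂ) * (sA:ℂ) * (sB:ℂ)) * Complex.I_sq

lemma im_conj_prod (a b c d : ℝ) :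
    ((starRingEnd ℂ) (Complex.exp ((a:ℂ) * Complex.I) - Complex.exp ((b:ℂ) * Complex.I)) *
      (Complex.exp ((c:ℂ) * Complex.I) - Complex.exp ((d:ℂ) * Complex.I))).im
      = 4 * Real.sin ((a - b) / 2) * Real.sin ((c - d) / 2) * Real.sin ((c + d - a - b) / 2) := by
  rw [exp_sub_exp a b, exp_sub_exp c d, conj_key]
  rw [show (c + d) / 2 - (a + b) / 2 = (c + d - a - b) / 2 by ring]
  simp only [Complex.mul_im, Complex.ofReal_re, Complex.ofReal_im,
    Complex.exp_ofReal_mul_I_re, Complex.exp_ofReal_mul_I_im]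
  ring

lemma abs_sin_eq {x : ℝ} (h : |x| ≤ Real.pi) : |Real.sin x| = Real.sin |x| := by
  rcases le_or_gt 0 x with h0 | h0
  · rw [abs_of_nonneg h0] at h ⊢
    exact abs_of_nonneg (Real.sin_nonneg_of_nonneg_of_le_pi h0 h)
  · rw [abs_of_neg h0] at h ⊢
    have hs : Real.sin x = -Real.sin (-x) := by rw [Real.sin_neg]; ring
    rw [hs, abs_neg]
    exact abs_of_nonneg (Real.sin_nonneg_of_nonneg_of_le_pi (by linarith) h)

lemma abs_split (lam u v w : ℝ) :
    |lam^2 * (4 * u * v * w)| = lam^2 * (4 * (|u| * (|v| * |w|))) := by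
  rw [abs_mul, abs_of_nonneg (sq_nonneg lam), abs_mul, abs_mul, abs_mul,
    show |(4:ℝ)| = 4 by norm_num]
  ring

lemma det_formula (lam : ℝ) (p q u v : ℤ × ℤ) (a b c d : ℝ)
    (hp : toC p = (lam:ℂ) * Complex.exp ((a:ℂ) * Complex.I))
    (hq : toC q = (lam:ℂ) * Complex.exp ((b:ℂ) * Complex.I))
    (hu : toC u = (lam:ℂ) * Complex.exp ((c:ℂ) * Complex.I))
    (hv : toC v = (lam:ℂ) * Complex.exp ((d:ℂ) * Complex.I)) :
    (((p.1 - q.1) * (u.2 - v.2) - (p.2 - q.2) * (u.1 - v.1) : ℤ) : ℝ)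
      = lam^2 * (4 * Real.sin ((a-b)/2) * Real.sin ((c-d)/2) * Real.sin ((c+d-a-b)/2)) := by
  have h1 : toC (p - q) = (lam:ℂ) * (Complex.exp ((a:ℂ) * Complex.I) - Complex.exp ((b:ℂ) * Complex.I)) := by
    rw [toC_sub, hp, hq]; ring
  have h2 : toC (u - v) = (lam:ℂ) * (Complex.exp ((c:ℂ) * Complex.I) - Complex.exp ((d:ℂ) * Complex.I)) := by
    rw [toC_sub, hu, hv]; ring
  have h3 := im_conj_toC (p - q) (u - v)
  have h4 : (starRingEnd ℂ) (toC (p - q)) * toC (u - v)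
      = ((lam^2 : ℝ) : ℂ) * ((starRingEnd ℂ) (Complex.exp ((a:ℂ) * Complex.I) - Complex.exp ((b:ℂ) * Complex.I)) *
          (Complex.exp ((c:ℂ) * Complex.I) - Complex.exp ((d:ℂ) * Complex.I))) := by
    rw [h1, h2, map_mul, Complex.conj_ofReal]
    push_cast
    ring
  have h5 : ((p - q).1 * (u - v).2 - (p - q).2 * (u - v).1 : ℤ)
      = (p.1 - q.1) * (u.2 - v.2) - (p.2 - q.2) * (u.1 - v.1) := by
    simp [Prod.fst_sub, Prod.snd_sub]
  rw [h5] at h3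
  rw [← h3, h4, Complex.mul_im, Complex.ofReal_re, Complex.ofReal_im, im_conj_prod]
  ring

set_option maxHeartbeats 2000000 in
/-- Four distinct lattice points on an arc of length `r` of the circle of radius `λ`
satisfy `|P₀ - Q₀| · |P₁ - Q₁| · r > c·λ` for an absolute constant `c > 0`. -/
theorem stmt_1 :
    ∃ c : ℝ, 0 < c ∧
      ∀ (lam r θ₀ : ℝ), 0 < lam → 0 < r →
        ∀ (P₀ P₁ Q₀ Q₁ : ℤ × ℤ),
          P₀ ≠ P₁ → P₀ ≠ Q₀ → P₀ ≠ Q₁ → P₁ ≠ Q₀ → P₁ ≠ Q₁ → Q₀ ≠ Q₁ →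
          (∀ P ∈ ({P₀, P₁, Q₀, Q₁} : Set (ℤ × ℤ)),
            ∃ t ∈ Set.Icc θ₀ (θ₀ + r / lam),
              toC P = lam * Complex.exp (t * Complex.I)) →
          c * lam <
            ‖toC P₀ - toC Q₀‖ * ‖toC P₁ - toC Q₁‖ * r := by
  refine ⟨1/2, by norm_num, ?_⟩
  intro lam r θ₀ hlam hr P₀ P₁ Q₀ Q₁ hPP hP0Q0 hP0Q1 hP1Q0 hP1Q1 hQQ harc
  have habs1 : 1 ≤ ‖toC P₀ - toC Q₀‖ := by
    rw [← toC_sub]; exact one_le_abs_toC (sub_ne_zero_of_ne hP0Q0)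
  have habs2 : 1 ≤ ‖toC P₁ - toC Q₁‖ := by
    rw [← toC_sub]; exact one_le_abs_toC (sub_ne_zero_of_ne hP1Q1)
  rcases le_or_gt lam r with hcase | hcase
  · nlinarith only [mul_le_mul habs1 habs2 (by norm_num) (le_trans zero_le_one habs1), hr, hlam,
      hcase]
  -- hard case : r < lam
  obtain ⟨ta, hta, hPa⟩ := harc P₀ (by simp)
  obtain ⟨tc, htc, hPc⟩ := harc P₁ (by simp)
  obtain ⟨tb, htb, hQb⟩ := harc Q₀ (by simp)
  obtain ⟨td, htd, hQd⟩ := harc Q₁ (by simp)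
  obtain ⟨hta1, hta2⟩ := hta
  obtain ⟨htb1, htb2⟩ := htb
  obtain ⟨htc1, htc2⟩ := htc
  obtain ⟨htd1, htd2⟩ := htd
  have hψ : r / lam < 1 := (div_lt_one hlam).2 hcase
  have hψ0 : 0 < r / lam := div_pos hr hlam
  have key_ne : ∀ {s t : ℝ} {p q : ℤ × ℤ}, toC p = (lam:ℂ) * Complex.exp ((s:ℂ) * Complex.I) →
      toC q = (lam:ℂ) * Complex.exp ((t:ℂ) * Complex.I) → p ≠ q → s ≠ t := by
    intro s t p q hp hq hpq hst
    exact hpq (toC_inj_s1 (by rw [hp, hq, hst]))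
  have nab : ta ≠ tb := key_ne hPa hQb hP0Q0
  have ncd : tc ≠ td := key_ne hPc hQd hP1Q1
  have nac : ta ≠ tc := key_ne hPa hPc hPP
  have ncb : tc ≠ tb := key_ne hPc hQb hP1Q0
  have nad : ta ≠ td := key_ne hPa hQd hP0Q1
  have pi3 := Real.pi_gt_three
  have sin_ne : ∀ u : ℝ, u ≠ 0 → |u| < 2 → Real.sin u ≠ 0 := by
    intro u hu hlt h
    obtain ⟨hl, hr'⟩ := abs_lt.1 hlt
    rw [Real.sin_eq_zero_iff_of_lt_of_lt (by linarith) (by linarith)] at h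
    exact hu h
  have habsu : ‖toC P₀ - toC Q₀‖ = lam * (2 * |Real.sin ((ta - tb)/2)|) := by
    have h : toC P₀ - toC Q₀
        = (lam:ℂ) * (Complex.exp ((ta:ℂ) * Complex.I) - Complex.exp ((tb:ℂ) * Complex.I)) := by
      rw [hPa, hQb]; ring
    rw [h, norm_mul, Complex.norm_real, Real.norm_eq_abs, abs_of_pos hlam, abs_exp_sub_exp]
  have habsv : ‖toC P₁ - toC Q₁‖ = lam * (2 * |Real.sin ((tc - td)/2)|) := by
    have h : toC P₁ - toC Q₁
        = (lam:ℂ) * (Complex.exp ((tc:ℂ) * Complex.I) - Complex.exp ((td:ℂ) * Complex.I)) := by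
      rw [hPc, hQd]; ring
    rw [h, norm_mul, Complex.norm_real, Real.norm_eq_abs, abs_of_pos hlam, abs_exp_sub_exp]
  rw [habsu, habsv]
  have hdet := det_formula lam P₀ Q₀ P₁ Q₁ ta tb tc td hPa hQb hPc hQd
  set x : ℝ := (ta - tb) / 2 with hxdef
  set y : ℝ := (tc - td) / 2 with hydef
  have hxb : |x| ≤ (r/lam)/2 := by
    rw [hxdef, abs_div, abs_two]
    have h : |ta - tb| ≤ r/lam := abs_le.2 ⟨by linarith, by linarith⟩
    linarith
  have hyb : |y| ≤ (r/lam)/2 := by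
    rw [hydef, abs_div, abs_two]
    have h : |tc - td| ≤ r/lam := abs_le.2 ⟨by linarith, by linarith⟩
    linarith
  have hx0 : x ≠ 0 := div_ne_zero (sub_ne_zero_of_ne nab) two_ne_zero
  have hy0 : y ≠ 0 := div_ne_zero (sub_ne_zero_of_ne ncd) two_ne_zero
  have hsA_ne : Real.sin x ≠ 0 := sin_ne x hx0 (by linarith)
  have hsB_ne : Real.sin y ≠ 0 := sin_ne y hy0 (by linarith)
  have hsAnn : (0:ℝ) ≤ |Real.sin x| := abs_nonneg _
  have hsBnn : (0:ℝ) ≤ |Real.sin y| := abs_nonneg _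
  rcases eq_or_ne ((P₀.1 - Q₀.1) * (P₁.2 - Q₁.2) - (P₀.2 - Q₀.2) * (P₁.1 - Q₁.1) : ℤ) 0
    with hn0 | hn0
  · -- parallel case
    have hC0 : (tc + td - ta - tb) / 2 = 0 := by
      have hsC : Real.sin ((tc + td - ta - tb)/2) = 0 := by
        by_contra hne
        have hne' := mul_ne_zero (pow_ne_zero 2 hlam.ne')
          (mul_ne_zero (mul_ne_zero (mul_ne_zero four_ne_zero hsA_ne) hsB_ne) hne)
        exact hne' (by rw [← hdet, hn0]; norm_num)
      have harg : |(tc + td - ta - tb)/2| < 2 := by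
        rw [abs_div, abs_two]
        have h : |tc + td - ta - tb| ≤ 2 * (r/lam) := abs_le.2 ⟨by linarith, by linarith⟩
        linarith
      obtain ⟨hl, hr'⟩ := abs_lt.1 harg
      rwa [Real.sin_eq_zero_iff_of_lt_of_lt (by linarith) (by linarith)] at hsC
    have hpar : tc + td = ta + tb := by linarith
    set M : ℝ := max |x| |y| with hMdef
    have hxM : |x| ≤ M := le_max_left _ _
    have hyM : |y| ≤ M := le_max_right _ _
    have hM0 : 0 < M := lt_of_lt_of_le (abs_pos.2 hx0) hxM
    have hMb : M ≤ (r/lam)/2 := max_le hxb hyb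
    have hrM : 2 * lam * M ≤ r := by
      have h := mul_le_mul_of_nonneg_left hMb hlam.le
      have h2 : lam * ((r/lam)/2) = r/2 := by field_simp
      linarith only [h, h2]
    have hxbd : |x| ≤ 1/2 := by linarith
    have hybd : |y| ≤ 1/2 := by linarith
    -- second determinant: (P₀-Q₀, P₀-P₁)
    have hdet2 := det_formula lam P₀ Q₀ P₀ P₁ ta tb ta tc hPa hQb hPa hPc
    rw [show (ta + tc - ta - tb)/2 = (tc - tb)/2 by ring] at hdet2
    -- third determinant: (P₁-Q₁, P₁-P₀)
    have hdet3 := det_formula lam P₁ Q₁ P₁ P₀ tc td tc ta hPc hQd hPc hPa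
    rw [show (tc + ta - tc - td)/2 = (ta - td)/2 by ring] at hdet3
    have hs1_ne : Real.sin ((ta - tc)/2) ≠ 0 := by
      apply sin_ne _ (div_ne_zero (sub_ne_zero_of_ne nac) two_ne_zero)
      rw [abs_div, abs_two]
      have h : |ta - tc| ≤ r/lam := abs_le.2 ⟨by linarith, by linarith⟩
      linarith
    have hs2_ne : Real.sin ((tc - tb)/2) ≠ 0 := by
      apply sin_ne _ (div_ne_zero (sub_ne_zero_of_ne ncb) two_ne_zero)
      rw [abs_div, abs_two]
      have h : |tc - tb| ≤ r/lam := abs_le.2 ⟨by linarith, by linarith⟩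
      linarith
    have hs3_ne : Real.sin ((tc - ta)/2) ≠ 0 := by
      apply sin_ne _ (div_ne_zero (sub_ne_zero_of_ne nac.symm) two_ne_zero)
      rw [abs_div, abs_two]
      have h : |tc - ta| ≤ r/lam := abs_le.2 ⟨by linarith, by linarith⟩
      linarith
    have hs4_ne : Real.sin ((ta - td)/2) ≠ 0 := by
      apply sin_ne _ (div_ne_zero (sub_ne_zero_of_ne nad) two_ne_zero)
      rw [abs_div, abs_two]
      have h : |ta - td| ≤ r/lam := abs_le.2 ⟨by linarith, by linarith⟩
      linarith
    -- integrality lower bounds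
    have hint2 : (1:ℝ) ≤ |(((P₀.1 - Q₀.1) * (P₀.2 - P₁.2) - (P₀.2 - Q₀.2) * (P₀.1 - P₁.1) : ℤ) : ℝ)| := by
      have hm : ((P₀.1 - Q₀.1) * (P₀.2 - P₁.2) - (P₀.2 - Q₀.2) * (P₀.1 - P₁.1) : ℤ) ≠ 0 := by
        rw [← Int.cast_ne_zero (α := ℝ), hdet2]
        exact mul_ne_zero (pow_ne_zero 2 hlam.ne')
          (mul_ne_zero (mul_ne_zero (mul_ne_zero four_ne_zero hsA_ne) hs1_ne) hs2_ne)
      rw [← Int.cast_abs]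
      exact_mod_cast Int.one_le_abs hm
    have hint3 : (1:ℝ) ≤ |(((P₁.1 - Q₁.1) * (P₁.2 - P₀.2) - (P₁.2 - Q₁.2) * (P₁.1 - P₀.1) : ℤ) : ℝ)| := by
      have hm : ((P₁.1 - Q₁.1) * (P₁.2 - P₀.2) - (P₁.2 - Q₁.2) * (P₁.1 - P₀.1) : ℤ) ≠ 0 := by
        rw [← Int.cast_ne_zero (α := ℝ), hdet3]
        exact mul_ne_zero (pow_ne_zero 2 hlam.ne')
          (mul_ne_zero (mul_ne_zero (mul_ne_zero four_ne_zero hsB_ne) hs3_ne) hs4_ne)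
      rw [← Int.cast_abs]
      exact_mod_cast Int.one_le_abs hm
    -- size bounds on the auxiliary sines
    have hs1M : |Real.sin ((ta - tc)/2)| ≤ M := by
      refine le_trans Real.abs_sin_le_abs ?_
      have e : (ta - tc)/2 = (x - y)/2 := by rw [hxdef, hydef]; linarith
      rw [e, abs_div, abs_two]
      have h : |x - y| ≤ 2*M := abs_le.2
        ⟨by linarith [neg_abs_le x, le_abs_self y], by linarith [le_abs_self x, neg_abs_le y]⟩
      linarith
    have hs2M : |Real.sin ((tc - tb)/2)| ≤ M := by
      refine le_trans Real.abs_sin_le_abs ?_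
      have e : (tc - tb)/2 = (x + y)/2 := by rw [hxdef, hydef]; linarith
      rw [e, abs_div, abs_two]
      have h : |x + y| ≤ 2*M := abs_le.2
        ⟨by linarith [neg_abs_le x, neg_abs_le y], by linarith [le_abs_self x, le_abs_self y]⟩
      linarith
    have hs3M : |Real.sin ((tc - ta)/2)| ≤ M := by
      refine le_trans Real.abs_sin_le_abs ?_
      have e : (tc - ta)/2 = (y - x)/2 := by rw [hxdef, hydef]; linarith
      rw [e, abs_div, abs_two]
      have h : |y - x| ≤ 2*M := abs_le.2
        ⟨by linarith [neg_abs_le y, le_abs_self x], by linarith [le_abs_self y, neg_abs_le x]⟩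
      linarith
    have hs4M : |Real.sin ((ta - td)/2)| ≤ M := by
      refine le_trans Real.abs_sin_le_abs ?_
      have e : (ta - td)/2 = (x + y)/2 := by rw [hxdef, hydef]; linarith
      rw [e, abs_div, abs_two]
      have h : |x + y| ≤ 2*M := abs_le.2
        ⟨by linarith [neg_abs_le x, neg_abs_le y], by linarith [le_abs_self x, le_abs_self y]⟩
      linarith
    have habseq2 : |(((P₀.1 - Q₀.1) * (P₀.2 - P₁.2) - (P₀.2 - Q₀.2) * (P₀.1 - P₁.1) : ℤ) : ℝ)|
        = lam^2 * (4 * (|Real.sin x| * (|Real.sin ((ta-tc)/2)| * |Real.sin ((tc-tb)/2)|))) := by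
      rw [hdet2, abs_split]
    have habseq3 : |(((P₁.1 - Q₁.1) * (P₁.2 - P₀.2) - (P₁.2 - Q₁.2) * (P₁.1 - P₀.1) : ℤ) : ℝ)|
        = lam^2 * (4 * (|Real.sin y| * (|Real.sin ((tc-ta)/2)| * |Real.sin ((ta-td)/2)|))) := by
      rw [hdet3, abs_split]
    have hA1 : 1 ≤ lam^2 * (4 * (|Real.sin x| * (M * M))) := by
      refine le_trans (habseq2 ▸ hint2) ?_
      have t1 : |Real.sin ((ta-tc)/2)| * |Real.sin ((tc-tb)/2)| ≤ M * M :=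
        mul_le_mul hs1M hs2M (abs_nonneg _) hM0.le
      exact mul_le_mul_of_nonneg_left (mul_le_mul_of_nonneg_left
        (mul_le_mul_of_nonneg_left t1 hsAnn) (by norm_num : (0:ℝ) ≤ 4)) (sq_nonneg lam)
    have hB1 : 1 ≤ lam^2 * (4 * (|Real.sin y| * (M * M))) := by
      refine le_trans (habseq3 ▸ hint3) ?_
      have t1 : |Real.sin ((tc-ta)/2)| * |Real.sin ((ta-td)/2)| ≤ M * M :=
        mul_le_mul hs3M hs4M (abs_nonneg _) hM0.le
      exact mul_le_mul_of_nonneg_left (mul_le_mul_of_nonneg_left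
        (mul_le_mul_of_nonneg_left t1 hsBnn) (by norm_num : (0:ℝ) ≤ 4)) (sq_nonneg lam)
    rcases le_total |y| |x| with hxy | hxy
    · -- M = |x|
      have hMx : M = |x| := max_eq_left hxy
      have h0x : 0 < |x| := abs_pos.2 hx0
      have hsin := Real.sin_gt_sub_cube h0x
      have hAlow : (15/16) * M ≤ |Real.sin x| := by
        rw [hMx, abs_sin_eq (by linarith : |x| ≤ Real.pi)]
        have hsq : |x| * (|x| * |x|) ≤ |x| * (1/4) :=
          mul_le_mul_of_nonneg_left (by nlinarith only [hxbd, abs_nonneg x]) h0x.le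
        linarith only [hsin, hsq, pow_three |x|, h0x]
      have step1 : (15/8)*lam * 1 ≤ (15/8)*lam * (lam^2 * (4 * (|Real.sin y| * (M * M)))) :=
        mul_le_mul_of_nonneg_left hB1 (by linarith)
      have step2 : (15/8)*lam * (lam^2 * (4 * (|Real.sin y| * (M * M))))
          = (lam * (2 * ((15/16)*M))) * (lam * (2 * |Real.sin y|)) * (2*lam*M) := by ring
      have f1 : lam * (2 * ((15/16)*M)) ≤ lam * (2 * |Real.sin x|) := by
        linarith only [mul_le_mul_of_nonneg_left hAlow
          (mul_nonneg (by norm_num : (0:ℝ) ≤ 2) hlam.le)]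
      have f3 : (0:ℝ) ≤ lam * (2 * |Real.sin y|) := mul_nonneg hlam.le (by linarith)
      have step3 : (lam * (2 * ((15/16)*M))) * (lam * (2 * |Real.sin y|)) * (2*lam*M)
          ≤ (lam * (2 * |Real.sin x|)) * (lam * (2 * |Real.sin y|)) * r := by
        apply mul_le_mul (mul_le_mul_of_nonneg_right f1 f3) hrM
        · exact mul_nonneg (mul_nonneg (by norm_num) hlam.le) hM0.le
        · exact mul_nonneg (mul_nonneg hlam.le (by linarith)) f3
      linarith
    · -- M = |y|
      have hMy : M = |y| := max_eq_right hxy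
      have h0y : 0 < |y| := abs_pos.2 hy0
      have hsin := Real.sin_gt_sub_cube h0y
      have hBlow : (15/16) * M ≤ |Real.sin y| := by
        rw [hMy, abs_sin_eq (by linarith : |y| ≤ Real.pi)]
        have hsq : |y| * (|y| * |y|) ≤ |y| * (1/4) :=
          mul_le_mul_of_nonneg_left (by nlinarith only [hybd, abs_nonneg y]) h0y.le
        linarith only [hsin, hsq, pow_three |y|, h0y]
      have step1 : (15/8)*lam * 1 ≤ (15/8)*lam * (lam^2 * (4 * (|Real.sin x| * (M * M)))) :=
        mul_le_mul_of_nonneg_left hA1 (by linarith)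
      have step2 : (15/8)*lam * (lam^2 * (4 * (|Real.sin x| * (M * M))))
          = (lam * (2 * |Real.sin x|)) * (lam * (2 * ((15/16)*M))) * (2*lam*M) := by ring
      have f1 : lam * (2 * ((15/16)*M)) ≤ lam * (2 * |Real.sin y|) := by
        linarith only [mul_le_mul_of_nonneg_left hBlow
          (mul_nonneg (by norm_num : (0:ℝ) ≤ 2) hlam.le)]
      have fA : (0:ℝ) ≤ lam * (2 * |Real.sin x|) := mul_nonneg hlam.le (by linarith)
      have step3 : (lam * (2 * |Real.sin x|)) * (lam * (2 * ((15/16)*M))) * (2*lam*M)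
          ≤ (lam * (2 * |Real.sin x|)) * (lam * (2 * |Real.sin y|)) * r := by
        apply mul_le_mul (mul_le_mul_of_nonneg_left f1 fA) hrM
        · exact mul_nonneg (mul_nonneg (by norm_num) hlam.le) hM0.le
        · exact mul_nonneg fA (mul_nonneg hlam.le (by linarith))
      linarith
  · -- nonparallel case
    have hint : (1:ℝ) ≤ |(((P₀.1 - Q₀.1) * (P₁.2 - Q₁.2) - (P₀.2 - Q₀.2) * (P₁.1 - Q₁.1) : ℤ) : ℝ)| := by
      rw [← Int.cast_abs]
      exact_mod_cast Int.one_le_abs hn0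
    have hsC_le : |Real.sin ((tc + td - ta - tb)/2)| ≤ r/lam := by
      refine le_trans Real.abs_sin_le_abs ?_
      rw [abs_div, abs_two]
      have h : |tc + td - ta - tb| ≤ 2*(r/lam) := abs_le.2 ⟨by linarith, by linarith⟩
      linarith
    have heq : |(((P₀.1 - Q₀.1) * (P₁.2 - Q₁.2) - (P₀.2 - Q₀.2) * (P₁.1 - Q₁.1) : ℤ) : ℝ)|
        = lam^2 * (4 * (|Real.sin x| * (|Real.sin y| * |Real.sin ((tc + td - ta - tb)/2)|))) := by
      rw [hdet, abs_split]
    have hbound : (1:ℝ) ≤ lam^2 * (4 * (|Real.sin x| * (|Real.sin y| * (r/lam)))) := by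
      refine le_trans (heq ▸ hint) ?_
      have t1 : |Real.sin y| * |Real.sin ((tc + td - ta - tb)/2)| ≤ |Real.sin y| * (r/lam) :=
        mul_le_mul_of_nonneg_left hsC_le hsBnn
      exact mul_le_mul_of_nonneg_left (mul_le_mul_of_nonneg_left
        (mul_le_mul_of_nonneg_left t1 hsAnn) (by norm_num : (0:ℝ) ≤ 4)) (sq_nonneg lam)
    have hfinal : lam * (lam^2 * (4 * (|Real.sin x| * (|Real.sin y| * (r/lam)))))
        = lam * (2 * |Real.sin x|) * (lam * (2 * |Real.sin y|)) * r := by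
      field_simp
      ring
    have h6 := mul_le_mul_of_nonneg_left hbound hlam.le
    rw [hfinal] at h6
    linarith
end

section
/- Let m ≥ 2 and δ(m) = 1/(4⌊m/2⌋ + 2). Let E = λ² be a positive integer and let C be an arc of the circle {|x| = λ} in ℝ² of length r < √2 · λ^{1/2 − δ(m)}. Then C contains at most m lattice points of ℤ². -/
open GaussianInt Complex

noncomputable def Complex.abs : AbsoluteValue ℂ ℝ where
  toFun := norm
  map_mul' := norm_mul
  nonneg' := norm_nonneg
  eq_zero' := fun _ => norm_eq_zero
  add_le' := norm_add_le

lemma Complex.abs_apply (z : ℂ) : Complex.abs z = Real.sqrt (Complex.normSq z) := by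
  show ‖z‖ = _
  rw [Complex.norm_def]

lemma Complex.sq_abs (z : ℂ) : Complex.abs z ^ 2 = Complex.normSq z := Complex.sq_norm z

lemma Complex.abs_exp_ofReal_mul_I (x : ℝ) : Complex.abs (Complex.exp (x * Complex.I)) = 1 :=
  Complex.norm_exp_ofReal_mul_I x

lemma Complex.abs_ofReal (x : ℝ) : Complex.abs (x : ℂ) = |x| := Complex.norm_real x

lemma Complex.abs_natCast (n : ℕ) : Complex.abs (n : ℂ) = n := Complex.norm_natCast n

namespace Stmt4Aux

def gz : GaussianInt := ⟨1, 1⟩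

lemma gz_norm : Zsqrtd.norm gz = 2 := by norm_num [Zsqrtd.norm, gz]

lemma gz_ne_zero : gz ≠ 0 := by
  intro h
  have := congrArg Zsqrtd.re h
  simp [gz] at this

set_option synthInstance.maxHeartbeats 1000000 in
lemma gz_prime : Prime gz := by
  rw [← irreducible_iff_prime]
  constructor
  · intro hu
    have := Zsqrtd.norm_eq_one_iff.mpr hu
    rw [gz_norm] at this
    norm_num at this
  · intro a b hab
    have hnorm : a.norm.natAbs * b.norm.natAbs = 2 := by
      have h : a.norm * b.norm = 2 := by rw [← Zsqrtd.norm_mul, ← hab, gz_norm]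
      have h2 := congrArg Int.natAbs h
      rwa [Int.natAbs_mul] at h2
    have hp : (a.norm.natAbs * b.norm.natAbs).Prime := by rw [hnorm]; exact Nat.prime_two
    rcases Nat.prime_mul_iff.mp hp with ⟨_, h1⟩ | ⟨_, h1⟩
    · exact Or.inr (Zsqrtd.norm_eq_one_iff.mp h1)
    · exact Or.inl (Zsqrtd.norm_eq_one_iff.mp h1)

lemma gz_dvd_of_even {z : GaussianInt} (h : (2:ℤ) ∣ (z.re + z.im)) : gz ∣ z := by
  obtain ⟨k, hk⟩ := h
  refine ⟨⟨k, z.im - k⟩, ?_⟩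
  ext <;> simp [gz, Zsqrtd.re_mul, Zsqrtd.im_mul] <;> omega

lemma gz_even_of_dvd {z : GaussianInt} (h : gz ∣ z) : (2:ℤ) ∣ (z.re + z.im) := by
  obtain ⟨c, hc⟩ := h
  subst hc
  refine ⟨c.re, ?_⟩
  simp [gz, Zsqrtd.re_mul, Zsqrtd.im_mul]
  ring

lemma gz_dvd_sub {y₁ y₂ : GaussianInt} (h1 : ¬ gz ∣ y₁) (h2 : ¬ gz ∣ y₂) :
    gz ∣ (y₁ - y₂) := by
  apply gz_dvd_of_even
  have o1 : ¬ (2:ℤ) ∣ (y₁.re + y₁.im) := fun h => h1 (gz_dvd_of_even h)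
  have o2 : ¬ (2:ℤ) ∣ (y₂.re + y₂.im) := fun h => h2 (gz_dvd_of_even h)
  have : (y₁ - y₂).re + (y₁ - y₂).im = (y₁.re + y₁.im) - (y₂.re + y₂.im) := by
    simp [Zsqrtd.re_sub, Zsqrtd.im_sub]; ring
  rw [this]
  omega

lemma gz_two : (2 : GaussianInt) = gz * gz * ⟨0, -1⟩ := by
  ext <;> simp [gz, Zsqrtd.re_mul, Zsqrtd.im_mul]

lemma gz_factor : ∀ (a : ℕ) (E' : ℕ), ¬ (2 ∣ E') → ∀ z : GaussianInt,
    z.norm = ((2^a * E' : ℕ) : ℤ) → ∃ y, z = gz ^ a * y ∧ ¬ gz ∣ y := by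
  intro a
  induction a with
  | zero =>
    intro E' hE' z hz
    refine ⟨z, by simp, ?_⟩
    rintro ⟨c, hc⟩
    have h2 : z.norm = 2 * c.norm := by rw [hc, Zsqrtd.norm_mul, gz_norm]
    rw [hz] at h2
    simp only [pow_zero, one_mul] at h2
    have hd : (2:ℤ) ∣ (E' : ℤ) := ⟨c.norm, h2⟩
    exact hE' (by exact_mod_cast hd)
  | succ a ih =>
    intro E' hE' z hz
    have h2 : gz ∣ z := by
      have hdvd : gz ∣ (z.norm : GaussianInt) := by
        have h1 : (2:ℤ) ∣ z.norm := ⟨(2^a * E' : ℕ), by rw [hz]; push_cast; ring⟩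
        have h2' : ((2:ℤ) : GaussianInt) ∣ (z.norm : GaussianInt) :=
          map_dvd (Int.castRingHom GaussianInt) h1
        have h3 : gz ∣ ((2:ℤ) : GaussianInt) := by
          rw [show ((2:ℤ) : GaussianInt) = (2 : GaussianInt) by push_cast; ring, gz_two]
          exact ⟨gz * ⟨0,-1⟩, by ring⟩
        exact dvd_trans h3 h2'
      rw [Zsqrtd.norm_eq_mul_conj] at hdvd
      rcases gz_prime.dvd_mul.mp hdvd with h | h
      · exact h
      · obtain ⟨c, hc⟩ := h
        have hz' : z = star gz * star c := by
          have h4 := congrArg star hc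
          rw [star_star] at h4
          rwa [star_mul'] at h4
        refine ⟨⟨0,-1⟩ * star c, ?_⟩
        rw [hz']
        have : star gz = gz * ⟨0,-1⟩ := by
          ext <;> simp [gz, Zsqrtd.star_mk, Zsqrtd.re_mul, Zsqrtd.im_mul]
        rw [this]; ring
    obtain ⟨z₁, hz₁⟩ := h2
    have hn1 : z₁.norm = ((2^a * E' : ℕ) : ℤ) := by
      have h3 : z.norm = 2 * z₁.norm := by rw [hz₁, Zsqrtd.norm_mul, gz_norm]
      rw [hz] at h3
      have h4 : ((2^(a+1) * E' : ℕ) : ℤ) = 2 * ((2^a * E' : ℕ) : ℤ) := by push_cast; ring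
      rw [h4] at h3
      exact (mul_left_cancel₀ two_ne_zero h3).symm
    obtain ⟨y, hy, hyd⟩ := ih E' hE' z₁ hn1
    exact ⟨y, by rw [hz₁, hy, pow_succ]; ring, hyd⟩

lemma gz_toComplex : (gz : ℂ) = 1 + Complex.I := by
  rw [toComplex_def]; simp [gz]

lemma gz_abs : Complex.abs (gz : ℂ) = Real.sqrt 2 := by
  rw [gz_toComplex, Complex.abs_apply]
  congr 1
  simp [Complex.normSq_apply]
  norm_num

lemma one_le_abs_toComplex {g : GaussianInt} (hg : g ≠ 0) : 1 ≤ Complex.abs (g : ℂ) := by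
  have h1 : (1:ℝ) ≤ Complex.normSq (g : ℂ) := by
    have : Complex.normSq (g : ℂ) = ((g.re^2 + g.im^2 : ℤ) : ℝ) := by
      rw [Complex.normSq_apply, ← GaussianInt.intCast_re, ← GaussianInt.intCast_im]
      push_cast; ring
    rw [this]
    have hne : g.re ≠ 0 ∨ g.im ≠ 0 := by
      by_contra hc
      push_neg at hc
      exact hg (by ext <;> simp [hc.1, hc.2])
    have hsq1 : ∀ k : ℤ, k ≠ 0 → 1 ≤ k^2 := by
      intro k hk
      nlinarith [Int.one_le_abs hk, _root_.sq_abs k]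
    have : (1:ℤ) ≤ g.re^2 + g.im^2 := by
      rcases hne with h | h
      · nlinarith [hsq1 _ h, sq_nonneg g.im]
      · nlinarith [hsq1 _ h, sq_nonneg g.re]
    exact_mod_cast this
  have h2 := Complex.sq_abs (g : ℂ)
  nlinarith [AbsoluteValue.nonneg Complex.abs (g:ℂ)]

lemma abs_exp_sub_exp (x y : ℝ) :
    Complex.abs (Complex.exp (x * Complex.I) - Complex.exp (y * Complex.I)) ≤ |x - y| := by
  have hsq : Complex.abs (Complex.exp (x * Complex.I) - Complex.exp (y * Complex.I)) ^ 2
      ≤ |x - y| ^ 2 := by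
    rw [Complex.sq_abs, _root_.sq_abs]
    have hx : Complex.exp (x * Complex.I) = Complex.ofReal (Real.cos x) + Complex.ofReal (Real.sin x) * Complex.I := by
      rw [Complex.exp_mul_I, Complex.ofReal_cos, Complex.ofReal_sin]
    have hy : Complex.exp (y * Complex.I) = Complex.ofReal (Real.cos y) + Complex.ofReal (Real.sin y) * Complex.I := by
      rw [Complex.exp_mul_I, Complex.ofReal_cos, Complex.ofReal_sin]
    rw [hx, hy]
    have hre : Complex.normSq ((Complex.ofReal (Real.cos x) + Complex.ofReal (Real.sin x) * Complex.I) - (Complex.ofReal (Real.cos y) + Complex.ofReal (Real.sin y) * Complex.I)) = (Real.cos x - Real.cos y)^2 + (Real.sin x - Real.sin y)^2 := by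
      simp [Complex.normSq_apply, Complex.cos_ofReal_re, Complex.sin_ofReal_re]
      ring
    rw [hre]
    have h1 := Real.one_sub_sq_div_two_le_cos (x := x - y)
    have h2 := Real.cos_sub x y
    nlinarith [Real.sin_sq_add_cos_sq x, Real.sin_sq_add_cos_sq y]
  have h0 : (0:ℝ) ≤ Complex.abs (Complex.exp (x * Complex.I) - Complex.exp (y * Complex.I)) :=
    AbsoluteValue.nonneg _ _
  nlinarith [abs_nonneg (x - y)]

end Stmt4Aux
open Stmt4Aux

set_option maxHeartbeats 1000000 in
/-- An arc of length `r < √2 · λ^{1/2 - δ(m)}`, `δ(m) = 1/(4⌊m/2⌋+2)`, on the circle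
of radius `λ = √E` contains at most `m` lattice points. -/
theorem stmt_4 (m : ℕ) (hm : 2 ≤ m) (E : ℕ) (hE : 0 < E) (lam : ℝ)
    (hlam : lam = Real.sqrt E) (r θ₀ : ℝ)
    (hr : r < Real.sqrt 2 * lam ^ ((1 : ℝ) / 2 - 1 / (4 * (m / 2 : ℕ) + 2)))
    (S : Finset (ℤ × ℤ))
    (hS : ∀ p ∈ S, (p.1 ^ 2 + p.2 ^ 2 = (E : ℤ)) ∧
      ∃ t ∈ Set.Icc θ₀ (θ₀ + r / lam), toC p = lam * Complex.exp (t * Complex.I)) :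
    S.card ≤ m := by
  by_contra hcard
  push_neg at hcard
  set n := m + 1 with hn
  set s := m / 2 with hs
  have hsm : s ≤ m := Nat.div_le_self m 2
  have hs1 : 1 ≤ s := by omega
  have hms : m = 2 * s ∨ m = 2 * s + 1 := by omega
  -- select n points
  have hlen : n ≤ S.toList.length := by rw [Finset.length_toList]; omega
  have hnd : S.toList.Nodup := S.nodup_toList
  set p : Fin n → ℤ × ℤ := fun i => S.toList.get ⟨i.1, lt_of_lt_of_le i.isLt hlen⟩ with hp
  have hpmem : ∀ i, p i ∈ S := fun i => Finset.mem_toList.mp (S.toList.get_mem _)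
  have hpinj : Function.Injective p := by
    intro i j hij
    have h2 := (List.Nodup.get_inj_iff hnd).mp hij
    have h3 : (i : ℕ) = (j : ℕ) := by simpa using h2
    exact Fin.ext h3
  choose hnorm t ht hw using fun i => hS (p i) (hpmem i)
  have hlam0 : 0 < lam := by
    rw [hlam]; exact Real.sqrt_pos.mpr (by exact_mod_cast hE)
  -- gaussian integer points
  set z : Fin n → GaussianInt := fun i => ⟨(p i).1, (p i).2⟩ with hzdef
  have hznorm : ∀ i, Zsqrtd.norm (z i) = (E : ℤ) := by
    intro i
    rw [Zsqrtd.norm_def]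
    have h1 := hnorm i
    simp only [hzdef]
    linear_combination h1
  have hzinj : Function.Injective z := by
    intro i j hij
    apply hpinj
    have h1 := congrArg Zsqrtd.re hij
    have h2 := congrArg Zsqrtd.im hij
    exact Prod.ext h1 h2
  set w : Fin n → ℂ := fun i => (z i : ℂ) with hwdef2
  have hwt : ∀ i, w i = lam * Complex.exp (t i * Complex.I) := by
    intro i
    rw [← hw i]
    simp only [hwdef2, hzdef, toC, GaussianInt.toComplex_def]
  have hwabs : ∀ i, Complex.abs (w i) = lam := by
    intro i
    rw [hwt i, map_mul, Complex.abs_exp_ofReal_mul_I, mul_one, Complex.abs_ofReal,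
      abs_of_pos hlam0]
  -- chord bound
  have hchord : ∀ i j : Fin n, Complex.abs (w j - w i) ≤ r := by
    intro i j
    have h1 : Complex.abs (w j - w i) ≤ lam * |t j - t i| := by
      rw [hwt i, hwt j, ← mul_sub, map_mul, Complex.abs_ofReal, abs_of_pos hlam0]
      exact mul_le_mul_of_nonneg_left (abs_exp_sub_exp _ _) hlam0.le
    have h2 : |t j - t i| ≤ r / lam := by
      obtain ⟨ha1, ha2⟩ := ht i
      obtain ⟨hb1, hb2⟩ := ht j
      rw [abs_sub_le_iff]
      constructor <;> linarith
    calc Complex.abs (w j - w i) ≤ lam * |t j - t i| := h1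
      _ ≤ lam * (r / lam) := mul_le_mul_of_nonneg_left h2 hlam0.le
      _ = r := by field_simp
  have hwinj : Function.Injective w := fun i j hij =>
    hzinj (GaussianInt.toComplex_inj.mp hij)
  have hr0 : 0 < r := by
    have hne : w ⟨1, by omega⟩ - w ⟨0, by omega⟩ ≠ 0 := by
      rw [sub_ne_zero]
      intro hh
      simpa using congrArg Fin.val (hwinj hh)
    have h1 := hchord ⟨0, by omega⟩ ⟨1, by omega⟩
    have h2 := Complex.abs.pos hne
    linarith
  -- counting
  set N : ℕ := ∑ i : Fin n, (Finset.Ioi i).card with hN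
  have h2N : 2 * N = n * (n - 1) := by
    have h1 : N = ∑ i ∈ Finset.range n, (n - 1 - i) := by
      rw [hN]
      simp only [Fin.card_Ioi]
      exact Fin.sum_univ_eq_sum_range (fun i => n - 1 - i) n
    rw [h1, Finset.sum_range_reflect (fun j => j) n]
    have h4 := Finset.sum_range_id_mul_two n
    omega
  have hNne : N ≠ 0 := by
    intro h0
    rw [h0, mul_zero] at h2N
    have hn1 : n - 1 = m := by omega
    rw [hn1] at h2N
    rcases Nat.mul_eq_zero.mp h2N.symm with h | h <;> omega
  set c : ℕ := ∑ k : Fin n, (s - (k : ℕ)) with hc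
  have h2c : 2 * c = s * (s + 1) := by
    have h1 : c = ∑ k ∈ Finset.range n, (s - k) := Fin.sum_univ_eq_sum_range _ n
    have h2 : ∑ k ∈ Finset.range n, (s - k) = ∑ k ∈ Finset.range (s+1), (s - k) := by
      symm
      apply Finset.sum_subset
      · apply Finset.range_subset_range.mpr; omega
      · intro x hx hnx
        simp only [Finset.mem_range] at hnx
        omega
    have h3 : ∑ k ∈ Finset.range (s+1), (s - k) = ∑ k ∈ Finset.range (s+1), k := by
      have h5 := Finset.sum_range_reflect (fun j => j) (s+1)
      simpa using h5
    have h4 := Finset.sum_range_id_mul_two (s+1)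
    calc 2*c = (∑ k ∈ Finset.range (s+1), k) * 2 := by rw [h1, h2, h3]; ring
      _ = (s+1) * (s+1-1) := h4
      _ = s * (s+1) := by simp; ring
  -- matrix
  set A : Matrix (Fin n) (Fin n) GaussianInt :=
    Matrix.of (fun j k : Fin n => (star (z j)) ^ (s - (k : ℕ)) * (z j) ^ ((k : ℕ) - s)) with hA
  set EG : GaussianInt := ((E : ℤ) : GaussianInt) with hEG
  have hzsz : ∀ j, z j * star (z j) = EG := by
    intro j
    rw [hEG, ← hznorm j, Zsqrtd.norm_eq_mul_conj]
  have H1 : (∏ j, (z j) ^ s) * A.det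
      = (∏ k : Fin n, EG ^ (s - (k : ℕ))) * ∏ i : Fin n, ∏ j ∈ Finset.Ioi i, (z j - z i) := by
    have hEnt : Matrix.of (fun j k : Fin n => (z j) ^ s * A j k)
        = Matrix.of (fun j k : Fin n => EG ^ (s - (k : ℕ)) * (Matrix.vandermonde z) j k) := by
      refine Matrix.ext fun j k => ?_
      simp only [Matrix.of_apply, hA, Matrix.vandermonde_apply]
      rcases le_total (k : ℕ) s with hk | hk
      · have h0 : (k:ℕ) - s = 0 := by omega
        have h1 : s = (k:ℕ) + (s - (k:ℕ)) := by omega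
        rw [h0, pow_zero, mul_one]
        calc z j ^ s * star (z j) ^ (s - (k:ℕ))
            = z j ^ ((k:ℕ) + (s - (k:ℕ))) * star (z j) ^ (s - (k:ℕ)) := by rw [← h1]
          _ = z j ^ (k:ℕ) * (z j * star (z j)) ^ (s - (k:ℕ)) := by rw [pow_add, mul_pow]; ring
          _ = EG ^ (s - (k:ℕ)) * z j ^ (k:ℕ) := by rw [hzsz j]; ring
      · have h0 : s - (k:ℕ) = 0 := by omega
        rw [h0, pow_zero, pow_zero, one_mul, one_mul, ← pow_add]
        congr 1
        omega
    calc (∏ j, (z j) ^ s) * A.det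
        = (Matrix.of fun j k => (z j) ^ s * A j k).det := (Matrix.det_mul_column (fun j : Fin n => (z j) ^ s) A).symm
      _ = (Matrix.of fun j k : Fin n => EG ^ (s - (k:ℕ)) * (Matrix.vandermonde z) j k).det :=
          congrArg Matrix.det hEnt
      _ = (∏ k : Fin n, EG ^ (s - (k:ℕ))) * (Matrix.vandermonde z).det := Matrix.det_mul_row (fun k : Fin n => EG ^ (s - (k:ℕ))) (Matrix.vandermonde z)
      _ = _ := by rw [Matrix.det_vandermonde]
  have hVne : (∏ i : Fin n, ∏ j ∈ Finset.Ioi i, (z j - z i)) ≠ 0 := by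
    rw [Finset.prod_ne_zero_iff]
    intro i _
    rw [Finset.prod_ne_zero_iff]
    intro j hj
    have hij : i ≠ j := (Finset.mem_Ioi.mp hj).ne
    exact sub_ne_zero.mpr (fun hh => hij ((hzinj hh).symm))
  have hEGne : EG ≠ 0 := by
    rw [hEG]
    intro hh
    have h9 := congrArg Zsqrtd.re hh
    rw [Zsqrtd.re_intCast] at h9
    have h10 : (E:ℤ) = 0 := by simpa using h9
    omega
  have hdetne : A.det ≠ 0 := by
    intro hd
    rw [hd, mul_zero] at H1
    exact mul_ne_zero (Finset.prod_ne_zero_iff.mpr fun k _ => pow_ne_zero _ hEGne) hVne H1.symm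
  -- factor out powers of gz
  obtain ⟨a, E', hE', hEfact⟩ : ∃ a E', ¬ 2 ∣ E' ∧ E = 2 ^ a * E' := by
    refine ⟨E.factorization 2, E / 2 ^ (E.factorization 2), ?_, ?_⟩
    · exact Nat.not_dvd_ordCompl Nat.prime_two hE.ne'
    · exact (Nat.ordProj_mul_ordCompl_eq_self E 2).symm
  have hyexists : ∀ i, ∃ yy, z i = gz ^ a * yy ∧ ¬ gz ∣ yy := by
    intro i
    apply gz_factor a E' hE'
    rw [hznorm i, hEfact]
  choose y hy hyd using hyexists
  choose u hu using fun i j : Fin n => gz_dvd_sub (hyd j) (hyd i)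
  set Y : GaussianInt := ∏ j, (y j) ^ s with hY
  have hPz : (∏ j, (z j) ^ s) = gz ^ (a * s * n) * Y := by
    rw [hY]
    calc ∏ j, (z j)^s = ∏ j, (gz ^ (a*s) * (y j)^s) := by
          apply Finset.prod_congr rfl
          intro j _
          rw [hy j, mul_pow, ← pow_mul]
      _ = (∏ _j : Fin n, gz ^ (a*s)) * ∏ j, (y j)^s := Finset.prod_mul_distrib
      _ = gz ^ (a*s*n) * ∏ j, (y j)^s := by
          rw [Finset.prod_const, Finset.card_univ, Fintype.card_fin, ← pow_mul]
  set U : GaussianInt := ∏ i : Fin n, ∏ j ∈ Finset.Ioi i, u i j with hU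
  have hPV : (∏ i : Fin n, ∏ j ∈ Finset.Ioi i, (z j - z i)) = gz ^ ((a+1) * N) * U := by
    have hstep : ∀ i j, z j - z i = gz ^ (a+1) * u i j := by
      intro i j
      rw [hy j, hy i, ← mul_sub, hu i j, pow_succ]
      ring
    calc (∏ i : Fin n, ∏ j ∈ Finset.Ioi i, (z j - z i))
        = ∏ i : Fin n, ∏ j ∈ Finset.Ioi i, (gz ^ (a+1) * u i j) :=
          Finset.prod_congr rfl fun i _ => Finset.prod_congr rfl fun j _ => hstep i j
      _ = ∏ i : Fin n, ((gz ^ (a+1)) ^ (Finset.Ioi i).card * ∏ j ∈ Finset.Ioi i, u i j) :=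
          Finset.prod_congr rfl fun i _ => by rw [Finset.prod_mul_distrib, Finset.prod_const]
      _ = (∏ i : Fin n, (gz ^ (a+1)) ^ (Finset.Ioi i).card) * U := Finset.prod_mul_distrib
      _ = gz ^ ((a+1) * N) * U := by
          rw [Finset.prod_pow_eq_pow_sum, ← hN, ← pow_mul]
  set μ : GaussianInt := ⟨0, -1⟩ with hμ
  have hEGfact : EG = gz ^ (2*a) * (μ ^ a * (E' : GaussianInt)) := by
    rw [hEG]
    have h1 : ((E:ℤ) : GaussianInt) = ((2:GaussianInt) ^ a) * ((E' : ℕ) : GaussianInt) := by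
      have h2 : (E : ℤ) = (2:ℤ)^a * (E' : ℤ) := by rw [hEfact]; push_cast; ring
      rw [h2]
      push_cast
      ring
    have h3 : (2:GaussianInt)^a = gz^(2*a) * μ^a := by
      rw [gz_two, mul_pow, mul_pow, two_mul, pow_add]
    rw [h1, h3]
    ring
  have hProdEG : (∏ k : Fin n, EG ^ (s - (k:ℕ)))
      = gz ^ (2*a*c) * (μ ^ (a*c) * ((E' : ℕ) : GaussianInt) ^ c) := by
    calc (∏ k : Fin n, EG ^ (s - (k:ℕ))) = EG ^ c := Finset.prod_pow_eq_pow_sum _ _ _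
      _ = (gz ^ (2*a) * (μ ^ a * (E' : GaussianInt)))^c := by rw [hEGfact]
      _ = _ := by
          rw [mul_pow, mul_pow, ← pow_mul, ← pow_mul]
  -- exponent bookkeeping
  have h2N' : 2 * N = (m+1) * m := by simpa [hn] using h2N
  have hkey1 : 2 * (s * n) ≤ 2 * (2 * c + N) := by
    rcases hms with hca | hca
    · have hNv : N = s*(2*s+1) :=
        Nat.eq_of_mul_eq_mul_left two_pos (by rw [h2N', hca]; ring)
      have hnv : n = 2*s+1 := by omega
      rw [hnv, hNv]
      linarith
    · have hNv : N = (s+1)*(2*s+1) :=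
        Nat.eq_of_mul_eq_mul_left two_pos (by rw [h2N', hca]; ring)
      have hnv : n = 2*s+2 := by omega
      rw [hnv, hNv]
      nlinarith [h2c]
  have hsn : s * n ≤ 2 * c + N := by linarith
  have hDle2 : a*s*n ≤ 2*a*c + a*N := by
    calc a*s*n = a*(s*n) := by ring
      _ ≤ a*(2*c+N) := Nat.mul_le_mul_left a hsn
      _ = 2*a*c + a*N := by ring
  set D : ℕ := 2*a*c + (a*N + N) - a*s*n with hD
  have hDsum : a*s*n + D = 2*a*c + (a*N + N) := by
    rw [hD]
    exact Nat.add_sub_cancel' (by linarith)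
  have hND : N ≤ D := by
    rw [hD]
    exact Nat.le_sub_of_add_le (by linarith)
  have H3 : Y * A.det = gz ^ D * (μ ^ (a*c) * ((E' : ℕ) : GaussianInt) ^ c * U) := by
    apply mul_left_cancel₀ (pow_ne_zero (a*s*n) gz_ne_zero)
    calc gz ^ (a*s*n) * (Y * A.det) = (∏ j, (z j) ^ s) * A.det := by rw [hPz]; ring
      _ = (∏ k : Fin n, EG ^ (s - (k:ℕ))) * ∏ i : Fin n, ∏ j ∈ Finset.Ioi i, (z j - z i) := H1
      _ = (gz ^ (2*a*c) * (μ ^ (a*c) * ((E' : ℕ) : GaussianInt) ^ c)) * (gz ^ ((a+1)*N) * U) := by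
          rw [hProdEG, hPV]
      _ = gz ^ (2*a*c + (a*N + N)) * (μ ^ (a*c) * ((E' : ℕ) : GaussianInt) ^ c * U) := by
          rw [pow_add]
          have haN : (a+1)*N = a*N + N := by ring
          rw [haN, pow_add]
          ring
      _ = gz ^ (a*s*n) * (gz ^ D * (μ ^ (a*c) * ((E' : ℕ) : GaussianInt) ^ c * U)) := by
          rw [← hDsum, pow_add, mul_assoc]
  have hgzY : ¬ gz ∣ Y := by
    rw [hY]
    intro hdvd
    obtain ⟨j, _, hj⟩ := (Prime.dvd_finset_prod_iff gz_prime _).mp hdvd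
    exact hyd j (gz_prime.dvd_of_dvd_pow hj)
  have hdvdN : gz ^ N ∣ A.det := by
    apply gz_prime.pow_dvd_of_dvd_mul_left N hgzY
    rw [H3]
    exact Dvd.dvd.mul_right (pow_dvd_pow gz hND) _
  obtain ⟨g, hg⟩ := hdvdN
  have hgne : g ≠ 0 := by
    intro h0
    apply hdetne
    rw [hg, h0, mul_zero]
  have habsdet : Real.sqrt 2 ^ N ≤ Complex.abs ((A.det : GaussianInt) : ℂ) := by
    rw [hg, map_mul, map_pow, map_mul, map_pow, gz_abs]
    calc Real.sqrt 2 ^ N = Real.sqrt 2 ^ N * 1 := (mul_one _).symm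
      _ ≤ Real.sqrt 2 ^ N * Complex.abs ((g : GaussianInt) : ℂ) := by
          apply mul_le_mul_of_nonneg_left (one_le_abs_toComplex hgne)
          positivity
  -- map to ℂ
  have H1C : (∏ j, (w j) ^ s) * ((A.det : GaussianInt) : ℂ)
      = (∏ k : Fin n, ((E:ℕ) : ℂ) ^ (s - (k:ℕ))) * ∏ i : Fin n, ∏ j ∈ Finset.Ioi i, (w j - w i) := by
    have h9 := congrArg (GaussianInt.toComplex) H1
    simpa [map_mul, map_prod, map_pow, map_sub, hEG, hwdef2] using h9
  set P : ℝ := ∏ i : Fin n, ∏ j ∈ Finset.Ioi i, Complex.abs (w j - w i) with hP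
  have habs : lam ^ (s*n) * Complex.abs ((A.det : GaussianInt) : ℂ) = (E:ℝ) ^ c * P := by
    have h9 := congrArg Complex.abs H1C
    rw [map_mul, map_mul] at h9
    have hL : Complex.abs (∏ j, (w j) ^ s) = lam ^ (s*n) := by
      rw [map_prod]
      have h8 : ∀ j ∈ (Finset.univ : Finset (Fin n)), Complex.abs ((w j)^s) = lam ^ s :=
        fun j _ => by rw [map_pow, hwabs]
      rw [Finset.prod_congr rfl h8, Finset.prod_const, Finset.card_univ, Fintype.card_fin,
        ← pow_mul]
    have hR1 : Complex.abs (∏ k : Fin n, ((E:ℕ):ℂ) ^ (s - (k:ℕ))) = (E:ℝ) ^ c := by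
      rw [map_prod]
      have h8 : ∀ k ∈ (Finset.univ : Finset (Fin n)),
          Complex.abs (((E:ℕ):ℂ) ^ (s - (k:ℕ))) = (E:ℝ) ^ (s - (k:ℕ)) :=
        fun k _ => by rw [map_pow, Complex.abs_natCast]
      rw [Finset.prod_congr rfl h8, Finset.prod_pow_eq_pow_sum]
    have hR2 : Complex.abs (∏ i : Fin n, ∏ j ∈ Finset.Ioi i, (w j - w i)) = P := by
      rw [map_prod]
      exact Finset.prod_congr rfl fun i _ => map_prod _ _ _
    rw [hL, hR1, hR2] at h9
    exact h9
  set K : ℕ := s * (m - s) with hK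
  have hsnK : s * n = 2*c + K := by
    calc s*n = s*((s+1) + (m - s)) := by rw [hn]; congr 1; omega
      _ = s*(s+1) + s*(m-s) := by ring
      _ = 2*c + K := by rw [h2c, hK]
  have hPval : P = lam ^ K * Complex.abs ((A.det : GaussianInt) : ℂ) := by
    have hElam : (E:ℝ) = lam^2 := by
      rw [hlam, Real.sq_sqrt (by positivity)]
    have h1 : lam ^ (s*n) = lam^(2*c) * lam^K := by rw [hsnK, pow_add]
    have h2 : (E:ℝ)^c = lam^(2*c) := by rw [hElam, ← pow_mul]
    have h3 := habs
    rw [h1, h2] at h3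
    have hposl : lam ^ (2*c) ≠ 0 := by positivity
    apply mul_left_cancel₀ hposl
    rw [← h3]
    ring
  have hPlow : Real.sqrt 2 ^ N * lam ^ K ≤ P := by
    rw [hPval]
    calc Real.sqrt 2 ^ N * lam ^ K = lam ^ K * Real.sqrt 2 ^ N := by ring
      _ ≤ lam ^ K * Complex.abs ((A.det : GaussianInt) : ℂ) := by
          apply mul_le_mul_of_nonneg_left habsdet
          positivity
  have hPup : P ≤ r ^ N := by
    rw [hP]
    calc (∏ i : Fin n, ∏ j ∈ Finset.Ioi i, Complex.abs (w j - w i))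
        ≤ ∏ i : Fin n, ∏ _j ∈ Finset.Ioi i, r := by
          apply Finset.prod_le_prod
          · intro i _
            exact Finset.prod_nonneg fun j _ => AbsoluteValue.nonneg _ _
          · intro i _
            exact Finset.prod_le_prod (fun j _ => AbsoluteValue.nonneg _ _)
              (fun j _ => hchord i j)
      _ = ∏ i : Fin n, r ^ (Finset.Ioi i).card :=
          Finset.prod_congr rfl fun i _ => Finset.prod_const r
      _ = r ^ N := Finset.prod_pow_eq_pow_sum _ _ _
  have hexp : ((1:ℝ)/2 - 1/(4*(s:ℝ)+2)) * (N:ℝ) = (K:ℝ) := by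
    have hs0 : (0:ℝ) < 4*(s:ℝ)+2 := by positivity
    rcases hms with hca | hca
    · have hNval : N = s * (2*s+1) := by
        have h1 : 2*N = (m+1)*m := by rw [h2N, hn]; simp
        rw [hca] at h1
        have h2 : (2*s+1)*(2*s) = 2*(s*(2*s+1)) := by ring
        rw [h2] at h1
        exact Nat.eq_of_mul_eq_mul_left two_pos h1
      have hKval : K = s * s := by
        rw [hK, hca]
        congr 1
        omega
      rw [hNval, hKval]
      push_cast
      field_simp
      ring
    · have hNval : N = (s+1) * (2*s+1) := by
        have h1 : 2*N = (m+1)*m := by rw [h2N, hn]; simp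
        rw [hca] at h1
        have h2 : (2*s+1+1)*(2*s+1) = 2*((s+1)*(2*s+1)) := by ring
        rw [h2] at h1
        exact Nat.eq_of_mul_eq_mul_left two_pos h1
      have hKval : K = s * (s+1) := by
        rw [hK, hca]
        congr 1
        omega
      rw [hNval, hKval]
      push_cast
      field_simp
      ring
  have hrpow : r ^ N < Real.sqrt 2 ^ N * lam ^ K := by
    calc r ^ N < (Real.sqrt 2 * lam ^ ((1:ℝ)/2 - 1/(4*(s:ℝ)+2))) ^ N :=
          pow_lt_pow_left₀ hr hr0.le hNne
      _ = Real.sqrt 2 ^ N * (lam ^ ((1:ℝ)/2 - 1/(4*(s:ℝ)+2))) ^ N := mul_pow _ _ _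
      _ = Real.sqrt 2 ^ N * lam ^ K := by
          congr 1
          rw [← Real.rpow_natCast (lam ^ ((1:ℝ)/2 - 1/(4*(s:ℝ)+2))) N, ← Real.rpow_mul hlam0.le,
            hexp, Real.rpow_natCast]
  linarith
end

section
/- Fix ε > 0. Then for all but O(N^{1−ε/3}) integers E ≤ N, every pair of distinct lattice points x, y ∈ ℤ² with |x|² = |y|² = E satisfies |x − y| > E^{(1−ε)/2}. -/
namespace Stmt5Aux

def q (p : ℤ × ℤ) : ℤ := p.1 ^ 2 + p.2 ^ 2
def dot (x z : ℤ × ℤ) : ℤ := x.1 * z.1 + x.2 * z.2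
def tf (z x : ℤ × ℤ) : ℤ := z.2 * x.1 - z.1 * x.2
noncomputable def box (M : ℤ) : Finset (ℤ × ℤ) := Finset.Icc (-M, -M) (M, M)
def gc (z : ℤ × ℤ) : ℕ := Int.gcd z.1 z.2
def prim (z : ℤ × ℤ) : ℤ × ℤ := (z.1 / Int.gcd z.1 z.2, z.2 / Int.gcd z.1 z.2)

lemma q_nonneg (p : ℤ × ℤ) : 0 ≤ q p := by rw [q]; positivity

lemma q_pos {p : ℤ × ℤ} (h : p ≠ 0) : 1 ≤ q p := by
  rcases lt_or_ge 0 (q p) with h1 | h1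
  · omega
  · exfalso; apply h
    rw [q] at h1
    have h2 : p.1 = 0 ∧ p.2 = 0 := by
      constructor <;> nlinarith [sq_nonneg p.1, sq_nonneg p.2]
    exact Prod.ext h2.1 h2.2

lemma mem_box {M : ℤ} {p : ℤ × ℤ} : p ∈ box M ↔ |p.1| ≤ M ∧ |p.2| ≤ M := by
  simp [box, Finset.Icc_prod_def, Finset.mem_Icc, abs_le, Prod.le_def, and_comm, and_assoc,
    and_left_comm]

lemma mem_box_of_q_le {p : ℤ × ℤ} {M : ℤ} (hM : 0 ≤ M) (h : q p ≤ M ^ 2) : p ∈ box M := by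
  rw [mem_box]
  rw [q] at h
  constructor <;> rw [abs_le] <;> constructor <;> nlinarith [sq_nonneg p.1, sq_nonneg p.2]

lemma box_card {M : ℤ} (hM : 0 ≤ M) : ((box M).card : ℤ) = (2 * M + 1) ^ 2 := by
  rw [box, Finset.card_Icc_prod]
  simp only [Int.card_Icc]
  have : (M + 1 - -M) = 2 * M + 1 := by ring
  rw [this]
  have h1 : ((2 * M + 1).toNat : ℤ) = 2 * M + 1 := Int.toNat_of_nonneg (by omega)
  push_cast [h1]
  ring

lemma gc_pos {z : ℤ × ℤ} (hz : z ≠ 0) : 1 ≤ gc z := by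
  rcases Nat.eq_zero_or_pos (gc z) with h | h
  · exfalso; apply hz
    rw [gc, Int.gcd_eq_zero_iff] at h
    exact Prod.ext h.1 h.2
  · exact h

lemma prim_spec {z : ℤ × ℤ} : z.1 = (gc z : ℤ) * (prim z).1 ∧ z.2 = (gc z : ℤ) * (prim z).2 := by
  constructor
  · exact (Int.mul_ediv_cancel' (Int.gcd_dvd_left _ _)).symm
  · exact (Int.mul_ediv_cancel' (Int.gcd_dvd_right _ _)).symm

lemma prim_coprime {z : ℤ × ℤ} (hz : z ≠ 0) : Int.gcd (prim z).1 (prim z).2 = 1 := by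
  apply Int.gcd_div_gcd_div_gcd
  exact_mod_cast gc_pos hz

lemma q_eq_gc_sq_mul {z : ℤ × ℤ} : q z = (gc z : ℤ) ^ 2 * q (prim z) := by
  obtain ⟨h1, h2⟩ := @prim_spec z
  rw [q, q, h1, h2]; ring

lemma prim_ne_zero {z : ℤ × ℤ} (hz : z ≠ 0) : prim z ≠ 0 := by
  intro h
  apply hz
  obtain ⟨h1, h2⟩ := @prim_spec z
  rw [h] at h1 h2
  simp at h1 h2
  exact Prod.ext h1 h2

lemma ortho {w d : ℤ × ℤ} (hco : Int.gcd w.1 w.2 = 1) (h : w.1 * d.1 + w.2 * d.2 = 0) :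
    ∃ k : ℤ, d.1 = k * w.2 ∧ d.2 = -(k * w.1) := by
  obtain ⟨a, b, hab⟩ := Int.isCoprime_iff_gcd_eq_one.mpr hco
  exact ⟨b * d.1 - a * d.2, by linear_combination a * h - d.1 * hab,
    by linear_combination b * h - d.2 * hab⟩


set_option maxHeartbeats 1000000 in
lemma line_card (N : ℕ) (z : ℤ × ℤ) (hz : z ≠ 0) (F : Finset (ℤ × ℤ))
    (hF : ∀ x ∈ F, 2 * dot x z = q z ∧ q x ≤ (N : ℤ)) :
    (F.card : ℝ) ≤ 4 * Real.sqrt N / Real.sqrt (q (prim z)) + 1 := by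
  rcases F.eq_empty_or_nonempty with hFe | ⟨x₀, hx₀⟩
  · rw [hFe]
    simp only [Finset.card_empty, Nat.cast_zero]
    positivity
  have hqw : 1 ≤ q (prim z) := q_pos (prim_ne_zero hz)
  have hg : (1:ℤ) ≤ (gc z : ℤ) := by exact_mod_cast gc_pos hz
  have hqz : 1 ≤ q z := q_pos hz
  have hD : 1 ≤ (gc z : ℤ) * q (prim z) := one_le_mul_of_one_le_of_one_le hg hqw
  have hqzw : q z = (gc z : ℤ) ^ 2 * q (prim z) := q_eq_gc_sq_mul
  obtain ⟨hz1, hz2⟩ := @prim_spec z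
  have key : ∀ x ∈ F, ∃ k : ℤ,
      tf z x - tf z x₀ = k * ((gc z : ℤ) * q (prim z)) ∧ k ^ 2 * q (prim z) ≤ 4 * N := by
    intro x hx
    obtain ⟨hxl, hxq⟩ := hF x hx
    obtain ⟨hxl0, hxq0⟩ := hF x₀ hx₀
    have hdz : (prim z).1 * (x.1 - x₀.1) + (prim z).2 * (x.2 - x₀.2) = 0 := by
      have h1 : (gc z : ℤ) * ((prim z).1 * (x.1 - x₀.1) + (prim z).2 * (x.2 - x₀.2)) = 0 := by
        have hdd : dot x z = dot x₀ z := by omega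
        rw [dot, dot] at hdd
        linear_combination hdd - (x.1 - x₀.1) * hz1 - (x.2 - x₀.2) * hz2
      have hg0 : (gc z : ℤ) ≠ 0 := by omega
      exact (mul_eq_zero.mp h1).resolve_left hg0
    obtain ⟨k, hk1, hk2⟩ := ortho (d := (x.1 - x₀.1, x.2 - x₀.2)) (prim_coprime hz) hdz
    simp only at hk1 hk2
    have hdiff : tf z x - tf z x₀ = k * ((gc z : ℤ) * q (prim z)) := by
      rw [tf, tf, q]
      linear_combination z.2 * hk1 - z.1 * hk2 + (k * (prim z).2) * hz2 + (k * (prim z).1) * hz1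
    refine ⟨k, hdiff, ?_⟩
    have lag : ∀ y : ℤ × ℤ, tf z y ^ 2 + dot y z ^ 2 = q y * q z := by
      intro y; rw [tf, dot, q, q]; ring
    have h1 : tf z x ^ 2 ≤ (N : ℤ) * q z := by
      have := lag x; nlinarith [sq_nonneg (dot x z)]
    have h2 : tf z x₀ ^ 2 ≤ (N : ℤ) * q z := by
      have := lag x₀; nlinarith [sq_nonneg (dot x₀ z)]
    have hsq : (k * ((gc z : ℤ) * q (prim z))) ^ 2 = (tf z x - tf z x₀) ^ 2 := by rw [hdiff]
    have h3 : (k * ((gc z : ℤ) * q (prim z))) ^ 2 ≤ 4 * (N : ℤ) * q z := by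
      nlinarith [sq_nonneg (tf z x + tf z x₀)]
    rw [hqzw] at h3
    by_contra hcon
    push_neg at hcon
    have hgq : 1 ≤ (gc z : ℤ) ^ 2 * q (prim z) := by nlinarith
    nlinarith [hgq, h3, hcon]
  classical
  set c : ℝ := 2 * Real.sqrt N / Real.sqrt (q (prim z)) with hc
  have hqwR : (0:ℝ) < ((q (prim z) : ℤ) : ℝ) := by exact_mod_cast hqw
  have hc0 : 0 ≤ c := by positivity
  have hcsq : c ^ 2 = 4 * (N : ℝ) / ((q (prim z) : ℤ) : ℝ) := by
    rw [hc, div_pow, mul_pow, Real.sq_sqrt (by positivity : (0:ℝ) ≤ (N:ℝ)),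
      Real.sq_sqrt (le_of_lt hqwR)]
    norm_num
  have hmem : ∀ x ∈ F,
      (fun x => (tf z x - tf z x₀) / ((gc z : ℤ) * q (prim z))) x ∈ Finset.Icc (-⌊c⌋) ⌊c⌋ := by
    intro x hx
    obtain ⟨k, hk, hkb⟩ := key x hx
    simp only
    rw [hk, Int.mul_ediv_cancel k (by omega)]
    have hkR : ((k : ℝ)) ^ 2 * ((q (prim z) : ℤ) : ℝ) ≤ 4 * N := by exact_mod_cast hkb
    have hkc : (k : ℝ) ^ 2 ≤ c ^ 2 := by
      rw [hcsq, le_div_iff₀ hqwR]; exact hkR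
    have habs : -c ≤ (k:ℝ) ∧ (k:ℝ) ≤ c := by constructor <;> nlinarith
    rw [Finset.mem_Icc]
    constructor
    · rw [neg_le]
      exact Int.le_floor.mpr (by push_cast; linarith [habs.1])
    · exact Int.le_floor.mpr habs.2
  have hinj2 : Set.InjOn (fun x => (tf z x - tf z x₀) / ((gc z : ℤ) * q (prim z))) F := by
    intro x hx x' hx' hfe
    obtain ⟨k, hk, -⟩ := key x hx
    obtain ⟨k', hk', -⟩ := key x' hx'
    simp only at hfe
    rw [hk, hk', Int.mul_ediv_cancel k (by omega), Int.mul_ediv_cancel k' (by omega)] at hfe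
    subst hfe
    have htf : tf z x = tf z x' := by omega
    have hdot : dot x z = dot x' z := by
      have := (hF x hx).1; have := (hF x' hx').1; omega
    rw [tf, tf] at htf
    rw [dot, dot] at hdot
    have hqz0 : q z ≠ 0 := by omega
    have e1 : x.1 * q z = x'.1 * q z := by rw [q]; linear_combination z.1 * hdot + z.2 * htf
    have e2 : x.2 * q z = x'.2 * q z := by rw [q]; linear_combination z.2 * hdot - z.1 * htf
    exact Prod.ext (mul_right_cancel₀ hqz0 e1) (mul_right_cancel₀ hqz0 e2)
  have hcard : F.card ≤ (Finset.Icc (-⌊c⌋) ⌊c⌋).card :=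
    Finset.card_le_card_of_injOn _ hmem hinj2
  have hfloor0 : 0 ≤ ⌊c⌋ := Int.floor_nonneg.mpr hc0
  have hIcc : ((Finset.Icc (-⌊c⌋) ⌊c⌋).card : ℝ) ≤ 2 * c + 1 := by
    rw [Int.card_Icc]
    have h1 : (⌊c⌋ + 1 - -⌊c⌋) = 2 * ⌊c⌋ + 1 := by ring
    rw [h1]
    have h2 : ((2 * ⌊c⌋ + 1).toNat : ℤ) = 2 * ⌊c⌋ + 1 := Int.toNat_of_nonneg (by omega)
    have h3 : ((2 * ⌊c⌋ + 1).toNat : ℝ) = 2 * (⌊c⌋ : ℝ) + 1 := by exact_mod_cast h2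
    rw [h3]
    have := Int.floor_le c
    linarith
  calc (F.card : ℝ) ≤ ((Finset.Icc (-⌊c⌋) ⌊c⌋).card : ℝ) := by exact_mod_cast hcard
    _ ≤ 2 * c + 1 := hIcc
    _ = 4 * Real.sqrt N / Real.sqrt (q (prim z)) + 1 := by rw [hc]; ring


lemma shell_card {m : ℤ} (hm : 1 ≤ m) : ((box m \ box (m - 1)).card : ℤ) = 8 * m := by
  have hsub : box (m - 1) ⊆ box m := by
    intro p hp
    rw [mem_box] at hp ⊢
    omega
  rw [Finset.card_sdiff_of_subset hsub]
  have h1 := box_card (by omega : (0:ℤ) ≤ m)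
  have h2 := box_card (by omega : (0:ℤ) ≤ m - 1)
  have hle : (box (m-1)).card ≤ (box m).card := Finset.card_le_card hsub
  push_cast [Nat.cast_sub hle]
  rw [h1, h2]
  ring

noncomputable def mx (w : ℤ × ℤ) : ℕ := (max |w.1| |w.2|).toNat

lemma mx_pos {w : ℤ × ℤ} (hw : w ≠ 0) : 1 ≤ mx w := by
  have h : w.1 ≠ 0 ∨ w.2 ≠ 0 := by
    by_contra h
    push_neg at h
    exact hw (Prod.ext h.1 h.2)
  rw [mx]
  rcases h with h | h
  · have := Int.one_le_abs h
    have h2 := le_max_left |w.1| |w.2|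
    omega
  · have := Int.one_le_abs h
    have h2 := le_max_right |w.1| |w.2|
    omega

lemma q_ge_mx_sq (w : ℤ × ℤ) : ((mx w : ℤ)) ^ 2 ≤ q w := by
  rw [mx, q]
  have h1 : |w.1| ^ 2 = w.1 ^ 2 := sq_abs w.1
  have h2 : |w.2| ^ 2 = w.2 ^ 2 := sq_abs w.2
  have h0 : (0:ℤ) ≤ max |w.1| |w.2| := le_trans (abs_nonneg _) (le_max_left _ _)
  rw [Int.toNat_of_nonneg h0]
  rcases max_cases |w.1| |w.2| with ⟨he, -⟩ | ⟨he, -⟩ <;> rw [he] <;>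
    nlinarith [sq_nonneg w.1, sq_nonneg w.2]

lemma zeta_bound (s : ℝ) (hs : 0 < s) (W : Finset (ℤ × ℤ)) (hW : ∀ w ∈ W, w ≠ 0) :
    ∑ w ∈ W, ((q w : ℝ)) ^ (-((2 + s) / 2)) ≤ 8 * ∑' n : ℕ, 1 / (n : ℝ) ^ (1 + s) := by
  classical
  have hsum : Summable (fun n : ℕ => 1 / (n : ℝ) ^ (1 + s)) :=
    Real.summable_one_div_nat_rpow.mpr (by linarith)
  set M := W.sup mx with hM
  have hmaps : ∀ w ∈ W, mx w ∈ Finset.Icc 1 M := by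
    intro w hw
    rw [Finset.mem_Icc]
    exact ⟨mx_pos (hW w hw), Finset.le_sup hw⟩
  rw [← Finset.sum_fiberwise_of_maps_to hmaps (fun w => ((q w : ℝ)) ^ (-((2 + s) / 2)))]
  have hinner : ∀ m ∈ Finset.Icc 1 M,
      ∑ w ∈ W.filter (fun w => mx w = m), ((q w : ℝ)) ^ (-((2 + s) / 2))
        ≤ 8 * (1 / (m : ℝ) ^ (1 + s)) := by
    intro m hm
    rw [Finset.mem_Icc] at hm
    have hm1 : 1 ≤ m := hm.1
    have hmR : (0:ℝ) < (m : ℝ) := by exact_mod_cast hm1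
    have hterm : ∀ w ∈ W.filter (fun w => mx w = m),
        ((q w : ℝ)) ^ (-((2 + s) / 2)) ≤ ((m : ℝ)) ^ (-((2:ℝ) + s)) := by
      intro w hw
      rw [Finset.mem_filter] at hw
      have hq : ((m:ℝ))^2 ≤ (q w : ℝ) := by
        have := q_ge_mx_sq w
        rw [hw.2] at this
        exact_mod_cast this
      have hqw : (0:ℝ) < (q w : ℝ) := lt_of_lt_of_le (by positivity) hq
      have e1 : ((m:ℝ)^2)^((2+s)/2) ≤ (q w:ℝ)^((2+s)/2) :=
        Real.rpow_le_rpow (by positivity) hq (by linarith)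
      calc (q w:ℝ)^(-((2+s)/2)) = ((q w:ℝ)^((2+s)/2))⁻¹ := Real.rpow_neg hqw.le _
        _ ≤ (((m:ℝ)^2)^((2+s)/2))⁻¹ := by
            apply inv_anti₀ (by positivity) e1
        _ = ((m:ℝ)^2)^(-((2+s)/2)) := (Real.rpow_neg (by positivity) _).symm
        _ = (m:ℝ)^(-((2:ℝ)+s)) := by
            rw [← Real.rpow_natCast (m:ℝ) 2, ← Real.rpow_mul hmR.le]
            congr 1
            push_cast
            ring
    have hcard : ((W.filter (fun w => mx w = m)).card : ℝ) ≤ 8 * m := by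
      have hsub : W.filter (fun w => mx w = m) ⊆ box (m:ℤ) \ box ((m:ℤ)-1) := by
        intro w hw
        rw [Finset.mem_filter] at hw
        have h0 : (0:ℤ) ≤ max |w.1| |w.2| := le_trans (abs_nonneg _) (le_max_left _ _)
        have hmx : max |w.1| |w.2| = (m:ℤ) := by
          have h3 := hw.2; rw [mx] at h3; omega
        rw [Finset.mem_sdiff, mem_box, mem_box]
        have h1 := le_max_left |w.1| |w.2|
        have h2 := le_max_right |w.1| |w.2|
        constructor
        · omega
        · intro hcon
          have h4 := max_le hcon.1 hcon.2
          omega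
      have h5 : (W.filter (fun w => mx w = m)).card ≤ (box (m:ℤ) \ box ((m:ℤ)-1)).card :=
        Finset.card_le_card hsub
      have h6 : (((box (m:ℤ) \ box ((m:ℤ)-1)).card : ℤ)) = 8 * (m:ℤ) :=
        shell_card (by exact_mod_cast hm1)
      have h7 : (((box (m:ℤ) \ box ((m:ℤ)-1)).card : ℝ)) = 8 * (m:ℝ) := by exact_mod_cast h6
      rw [← h7]
      exact_mod_cast h5
    have hsum1 : ∑ w ∈ W.filter (fun w => mx w = m), ((q w : ℝ)) ^ (-((2 + s) / 2))
        ≤ ((W.filter (fun w => mx w = m)).card : ℝ) * ((m : ℝ)) ^ (-((2:ℝ) + s)) := by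
      have := Finset.sum_le_card_nsmul _ _ _ hterm
      rwa [nsmul_eq_mul] at this
    have hpow0 : (0:ℝ) ≤ ((m : ℝ)) ^ (-((2:ℝ) + s)) := Real.rpow_nonneg hmR.le _
    calc ∑ w ∈ W.filter (fun w => mx w = m), ((q w : ℝ)) ^ (-((2 + s) / 2))
        ≤ ((W.filter (fun w => mx w = m)).card : ℝ) * ((m : ℝ)) ^ (-((2:ℝ) + s)) := hsum1
      _ ≤ (8 * (m:ℝ)) * ((m : ℝ)) ^ (-((2:ℝ) + s)) := by
          apply mul_le_mul_of_nonneg_right hcard hpow0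
      _ = 8 * (1 / (m : ℝ) ^ (1 + s)) := by
          rw [mul_assoc]
          congr 1
          rw [one_div, ← Real.rpow_neg hmR.le]
          nth_rewrite 1 [← Real.rpow_one (m:ℝ)]
          rw [← Real.rpow_add hmR]
          congr 1
          ring
  calc ∑ m ∈ Finset.Icc 1 M, ∑ w ∈ W.filter (fun w => mx w = m), ((q w : ℝ)) ^ (-((2 + s) / 2))
      ≤ ∑ m ∈ Finset.Icc 1 M, 8 * (1 / (m : ℝ) ^ (1 + s)) := Finset.sum_le_sum hinner
    _ = 8 * ∑ m ∈ Finset.Icc 1 M, 1 / (m : ℝ) ^ (1 + s) := by rw [Finset.mul_sum]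
    _ ≤ 8 * ∑' n : ℕ, 1 / (n : ℝ) ^ (1 + s) := by
        apply mul_le_mul_of_nonneg_left _ (by norm_num : (0:ℝ) ≤ 8)
        apply Summable.sum_le_tsum _ (fun i _ => by positivity) hsum



lemma abs_toC_sq (x y : ℤ × ℤ) :
    ‖toC x - toC y‖ ^ 2 = ((q (x - y) : ℤ) : ℝ) := by
  rw [Complex.sq_norm, Complex.normSq_apply]
  simp only [toC, q, Prod.fst_sub, Prod.snd_sub, Complex.sub_re, Complex.sub_im,
    Complex.add_re, Complex.add_im, Complex.mul_re, Complex.mul_im, Complex.I_re, Complex.I_im,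
    Complex.intCast_re, Complex.intCast_im]
  push_cast
  ring

def Wit (ε : ℝ) (E : ℕ) : Prop :=
  ∃ p : (ℤ × ℤ) × (ℤ × ℤ), p.1 ≠ p.2 ∧ q p.1 = (E : ℤ) ∧ q p.2 = (E : ℤ) ∧
    ‖toC p.1 - toC p.2‖ ≤ (E : ℝ) ^ ((1 - ε) / 2)

lemma dot_identity (x y : ℤ × ℤ) : 2 * dot x (x - y) - q (x - y) = q x - q y := by
  simp only [dot, q, Prod.fst_sub, Prod.snd_sub]
  ring

end Stmt5Aux

open Stmt5Aux in
open scoped Classical in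
set_option maxHeartbeats 1600000 in
/-- For all but `O(N^{1-ε/3})` integers `E ≤ N`, any two distinct lattice points on the
circle of radius `√E` are at distance greater than `E^{(1-ε)/2}`. -/
theorem stmt_5 (ε : ℝ) (hε : 0 < ε) :
    ∃ C : ℝ, 0 < C ∧ ∀ N : ℕ, 0 < N →
      (((Finset.Icc 1 N).filter (fun E : ℕ =>
        ¬ ∀ x y : ℤ × ℤ, x ≠ y →
            x.1 ^ 2 + x.2 ^ 2 = (E : ℤ) → y.1 ^ 2 + y.2 ^ 2 = (E : ℤ) →
            (E : ℝ) ^ ((1 - ε) / 2) < ‖toC x - toC y‖)).card : ℝ)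
        ≤ C * (N : ℝ) ^ (1 - ε / 3) := by
  by_cases hε1 : (1:ℝ) ≤ ε
  · -- trivial case : the set is empty
    refine ⟨1, one_pos, fun N hN => ?_⟩
    have hempty : ((Finset.Icc 1 N).filter (fun E : ℕ =>
        ¬ ∀ x y : ℤ × ℤ, x ≠ y →
            x.1 ^ 2 + x.2 ^ 2 = (E : ℤ) → y.1 ^ 2 + y.2 ^ 2 = (E : ℤ) →
            (E : ℝ) ^ ((1 - ε) / 2) < ‖toC x - toC y‖)) = ∅ := by
      rw [Finset.filter_eq_empty_iff]
      intro E hE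
      rw [Finset.mem_Icc] at hE
      rw [not_not]
      intro x y hxy hqx hqy
      have hz : x - y ≠ 0 := sub_ne_zero_of_ne hxy
      have hq2 : 2 ≤ q (x - y) := by
        have h1 := q_pos hz
        have h3 := dot_identity x y
        have hqq : q x = (E:ℤ) := hqx
        have hqq' : q y = (E:ℤ) := hqy
        omega
      have habs2 := abs_toC_sq x y
      have habs0 : (0:ℝ) ≤ ‖toC x - toC y‖ := norm_nonneg _
      have hq2R : (2:ℝ) ≤ ((q (x - y) : ℤ) : ℝ) := by exact_mod_cast hq2
      have habs : 1 < ‖toC x - toC y‖ := by nlinarith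
      have hE1 : (1:ℝ) ≤ (E:ℝ) := by exact_mod_cast hE.1
      have h5 : (E:ℝ) ^ ((1 - ε) / 2) ≤ 1 :=
        Real.rpow_le_one_of_one_le_of_nonpos hE1 (by linarith)
      linarith
    rw [hempty]
    simp only [Finset.card_empty, Nat.cast_zero]
    positivity
  · -- main case : ε < 1
    push_neg at hε1
    set K : ℝ := ∑' n : ℕ, 1 / (n : ℝ) ^ (1 + ε/3) with hK
    have hK0 : 0 ≤ K := tsum_nonneg (fun n => by positivity)
    refine ⟨32 * K + 10, by linarith, fun N hN => ?_⟩
    have hN1 : (1:ℝ) ≤ (N:ℝ) := by exact_mod_cast hN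
    have hN0 : (0:ℝ) < (N:ℝ) := by linarith
    have hNZ1 : (1:ℤ) ≤ (N:ℤ) := by exact_mod_cast hN
    set Rsq : ℝ := (N:ℝ) ^ (1 - ε) with hRsqdef
    have hRsq1 : (1:ℝ) ≤ Rsq := by
      rw [hRsqdef]
      calc (1:ℝ) = (N:ℝ) ^ (0:ℝ) := (Real.rpow_zero _).symm
        _ ≤ (N:ℝ) ^ (1 - ε) := Real.rpow_le_rpow_of_exponent_le hN1 (by linarith)
    have hRsqN : Rsq ≤ (N:ℝ) := by
      rw [hRsqdef]
      calc (N:ℝ) ^ (1 - ε) ≤ (N:ℝ) ^ (1:ℝ) := Real.rpow_le_rpow_of_exponent_le hN1 (by linarith)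
        _ = (N:ℝ) := Real.rpow_one _
    set Bad := (Finset.Icc 1 N).filter (fun E : ℕ =>
        ¬ ∀ x y : ℤ × ℤ, x ≠ y →
            x.1 ^ 2 + x.2 ^ 2 = (E : ℤ) → y.1 ^ 2 + y.2 ^ 2 = (E : ℤ) →
            (E : ℝ) ^ ((1 - ε) / 2) < ‖toC x - toC y‖) with hBaddef
    set P : Finset ((ℤ × ℤ) × (ℤ × ℤ)) := (box (2*(N:ℤ)) ×ˢ box (2*(N:ℤ))).filter
      (fun p => p.2 ≠ 0 ∧ 2 * dot p.1 p.2 = q p.2 ∧ q p.1 ≤ (N:ℤ) ∧ ((q p.2 : ℤ) : ℝ) ≤ Rsq)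
      with hPdef
    set Zs : Finset (ℤ × ℤ) := (box (2*(N:ℤ))).filter
      (fun z => z ≠ 0 ∧ ((q z : ℤ) : ℝ) ≤ Rsq) with hZdef
    -- step 1 : Bad.card ≤ P.card
    have hWit : ∀ E ∈ Bad, Wit ε E := by
      intro E hE
      rw [hBaddef, Finset.mem_filter] at hE
      obtain ⟨-, hE2⟩ := hE
      push_neg at hE2
      obtain ⟨x, y, hxy, hqx, hqy, hle⟩ := hE2
      exact ⟨(x, y), hxy, hqx, hqy, hle⟩
    have hBadP : Bad.card ≤ P.card := by
      apply Finset.card_le_card_of_injOn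
        (fun E => if h : Wit ε E then (h.choose.1, h.choose.1 - h.choose.2) else 0)
      · intro E hE
        have hW := hWit E hE
        simp only [dif_pos hW]
        have hEIcc : E ∈ Finset.Icc 1 N := (Finset.mem_filter.mp (hBaddef ▸ hE)).1
        rw [Finset.mem_Icc] at hEIcc
        obtain ⟨hp12, hq1, hq2, hle⟩ := hW.choose_spec
        have hz0 : hW.choose.1 - hW.choose.2 ≠ 0 := sub_ne_zero_of_ne hp12
        have hdot : 2 * dot hW.choose.1 (hW.choose.1 - hW.choose.2)
            = q (hW.choose.1 - hW.choose.2) := by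
          have := dot_identity hW.choose.1 hW.choose.2
          omega
        have hE1 : (1:ℝ) ≤ (E:ℝ) := by exact_mod_cast hEIcc.1
        have hE0 : (0:ℝ) ≤ (E:ℝ) := by linarith
        have hqzR : ((q (hW.choose.1 - hW.choose.2) : ℤ) : ℝ) ≤ Rsq := by
          have h1 := abs_toC_sq hW.choose.1 hW.choose.2
          have habs0 : (0:ℝ) ≤ ‖toC hW.choose.1 - toC hW.choose.2‖ :=
            norm_nonneg _
          have h2 : ‖toC hW.choose.1 - toC hW.choose.2‖ ^ 2
              ≤ ((E:ℝ) ^ ((1-ε)/2)) ^ 2 := by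
            nlinarith [Real.rpow_nonneg hE0 ((1-ε)/2)]
          have h3 : ((E:ℝ) ^ ((1-ε)/2)) ^ 2 = (E:ℝ) ^ (1-ε) := by
            rw [← Real.rpow_natCast ((E:ℝ) ^ ((1-ε)/2)) 2, ← Real.rpow_mul hE0]
            congr 1
            push_cast
            ring
          have h4 : (E:ℝ) ^ (1-ε) ≤ (N:ℝ) ^ (1-ε) :=
            Real.rpow_le_rpow hE0 (by exact_mod_cast hEIcc.2) (by linarith)
          rw [h1] at h2
          rw [hRsqdef]
          linarith
        have hqzN : q (hW.choose.1 - hW.choose.2) ≤ (N:ℤ) := by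
          have h5 : ((q (hW.choose.1 - hW.choose.2) : ℤ) : ℝ) ≤ (N:ℝ) := le_trans hqzR hRsqN
          exact_mod_cast h5
        have hqxN : q hW.choose.1 ≤ (N:ℤ) := by
          rw [hq1]
          exact_mod_cast hEIcc.2
        rw [hPdef, Finset.mem_coe, Finset.mem_filter, Finset.mem_product]
        refine ⟨⟨?_, ?_⟩, hz0, hdot, hqxN, hqzR⟩
        · exact mem_box_of_q_le (by omega) (by nlinarith [q_nonneg hW.choose.1])
        · exact mem_box_of_q_le (by omega)
            (by nlinarith [q_nonneg (hW.choose.1 - hW.choose.2)])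
      · intro E hE E' hE' hfe
        have hW := hWit E hE
        have hW' := hWit E' hE'
        simp only [dif_pos hW, dif_pos hW'] at hfe
        have h1 : hW.choose.1 = hW'.choose.1 := (Prod.ext_iff.mp hfe).1
        have hq1 := hW.choose_spec.2.1
        have hq1' := hW'.choose_spec.2.1
        rw [h1] at hq1
        have h2 : (E:ℤ) = (E':ℤ) := by rw [← hq1, hq1']
        exact_mod_cast h2
    -- step 2 : fiber over z
    have hPfib : P.card = ∑ z ∈ Zs, (P.filter (fun p => p.2 = z)).card := by
      apply Finset.card_eq_sum_card_fiberwise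
      intro p hp
      rw [hPdef, Finset.mem_coe, Finset.mem_filter, Finset.mem_product] at hp
      rw [hZdef, Finset.mem_coe, Finset.mem_filter]
      exact ⟨hp.1.2, hp.2.1, hp.2.2.2.2⟩
    -- step 3 : each fiber is small
    have hfibb : ∀ z ∈ Zs, ((P.filter (fun p => p.2 = z)).card : ℝ)
        ≤ 4 * Real.sqrt N / Real.sqrt ((q (prim z) : ℤ) : ℝ) + 1 := by
      intro z hz
      rw [hZdef, Finset.mem_filter] at hz
      obtain ⟨-, hz0, -⟩ := hz
      have himg : (P.filter (fun p => p.2 = z)).card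
          = ((P.filter (fun p => p.2 = z)).image Prod.fst).card := by
        rw [Finset.card_image_of_injOn]
        intro p hp p' hp' he
        rw [Finset.mem_coe, Finset.mem_filter] at hp hp'
        exact Prod.ext he (hp.2.trans hp'.2.symm)
      rw [himg]
      apply line_card N z hz0
      intro x hx
      rw [Finset.mem_image] at hx
      obtain ⟨p, hp, rfl⟩ := hx
      rw [Finset.mem_filter] at hp
      obtain ⟨hpP, hpz⟩ := hp
      rw [hPdef, Finset.mem_filter] at hpP
      obtain ⟨-, -, hd, hqx, -⟩ := hpP
      rw [hpz] at hd
      exact ⟨hd, hqx⟩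
    -- step 4 : sum the fiber bounds
    have hsum1 : (P.card : ℝ)
        ≤ 4 * Real.sqrt N * (∑ z ∈ Zs, 1 / Real.sqrt ((q (prim z) : ℤ) : ℝ)) + Zs.card := by
      rw [hPfib]
      push_cast
      calc ∑ z ∈ Zs, ((P.filter (fun p => p.2 = z)).card : ℝ)
          ≤ ∑ z ∈ Zs, (4 * Real.sqrt N / Real.sqrt ((q (prim z) : ℤ) : ℝ) + 1) :=
            Finset.sum_le_sum hfibb
        _ = 4 * Real.sqrt N * (∑ z ∈ Zs, 1 / Real.sqrt ((q (prim z) : ℤ) : ℝ)) + Zs.card := by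
            rw [Finset.sum_add_distrib, Finset.sum_const, nsmul_eq_mul, mul_one,
              Finset.mul_sum]
            congr 1
            apply Finset.sum_congr rfl
            intro z _
            ring
    -- step 5 : sum over primitive parts
    have hmapsprim : ∀ z ∈ Zs, prim z ∈ Zs := by
      intro z hz
      rw [hZdef, Finset.mem_filter] at hz ⊢
      obtain ⟨hbox, hz0, hqz⟩ := hz
      have hg : (1:ℤ) ≤ (gc z : ℤ) := by exact_mod_cast gc_pos hz0
      refine ⟨?_, prim_ne_zero hz0, ?_⟩
      · rw [mem_box] at hbox ⊢
        obtain ⟨hz1, hz2⟩ := @prim_spec z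
        have ha1 : |z.1| = (gc z : ℤ) * |(prim z).1| := by
          rw [hz1, abs_mul, abs_of_nonneg (by positivity : (0:ℤ) ≤ (gc z : ℤ))]
        have ha2 : |z.2| = (gc z : ℤ) * |(prim z).2| := by
          rw [hz2, abs_mul, abs_of_nonneg (by positivity : (0:ℤ) ≤ (gc z : ℤ))]
        constructor
        · nlinarith [abs_nonneg (prim z).1, hbox.1]
        · nlinarith [abs_nonneg (prim z).2, hbox.2]
      · have h2 : q (prim z) ≤ q z := by
          have hqq : q z = (gc z : ℤ) ^ 2 * q (prim z) := q_eq_gc_sq_mul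
          have h9 : (0:ℤ) ≤ ((gc z : ℤ) ^ 2 - 1) * q (prim z) :=
            mul_nonneg (by nlinarith) (q_nonneg _)
          linarith
        calc ((q (prim z) : ℤ) : ℝ) ≤ ((q z : ℤ) : ℝ) := by exact_mod_cast h2
          _ ≤ Rsq := hqz
    have hRsq0 : (0:ℝ) < Rsq := by linarith
    have hS1 : (∑ z ∈ Zs, 1 / Real.sqrt ((q (prim z) : ℤ) : ℝ))
        ≤ Real.sqrt Rsq * ∑ w ∈ Zs, (((q w : ℤ) : ℝ))⁻¹ := by
      rw [← Finset.sum_fiberwise_of_maps_to hmapsprim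
        (fun z => 1 / Real.sqrt ((q (prim z) : ℤ) : ℝ)), Finset.mul_sum]
      apply Finset.sum_le_sum
      intro w hw
      have hw' := hw
      rw [hZdef, Finset.mem_filter] at hw'
      obtain ⟨-, hw0, hwq⟩ := hw'
      have hqw1 : (1:ℤ) ≤ q w := q_pos hw0
      have hqwR : (0:ℝ) < ((q w : ℤ) : ℝ) := by exact_mod_cast hqw1
      have hsqw : (0:ℝ) < Real.sqrt ((q w : ℤ) : ℝ) := Real.sqrt_pos.mpr hqwR
      have hterm : ∀ z ∈ Zs.filter (fun z => prim z = w),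
          1 / Real.sqrt ((q (prim z) : ℤ) : ℝ) = 1 / Real.sqrt ((q w : ℤ) : ℝ) := by
        intro z hzf
        rw [Finset.mem_filter] at hzf
        rw [hzf.2]
      rw [Finset.sum_congr rfl hterm, Finset.sum_const, nsmul_eq_mul]
      have hcard : (((Zs.filter (fun z => prim z = w)).card : ℕ) : ℝ)
          ≤ Real.sqrt Rsq / Real.sqrt ((q w : ℤ) : ℝ) := by
        have hsub : ∀ z ∈ Zs.filter (fun z => prim z = w),
            gc z ∈ Finset.Icc 1 (⌊Real.sqrt Rsq / Real.sqrt ((q w : ℤ) : ℝ)⌋₊) := by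
          intro z hzf
          rw [Finset.mem_filter] at hzf
          obtain ⟨hzZ, hzp⟩ := hzf
          rw [hZdef, Finset.mem_filter] at hzZ
          obtain ⟨-, hz0, hzq⟩ := hzZ
          rw [Finset.mem_Icc]
          refine ⟨gc_pos hz0, Nat.le_floor ?_⟩
          have hqq : q z = (gc z : ℤ) ^ 2 * q w := by rw [← hzp]; exact q_eq_gc_sq_mul
          have hgR : ((gc z : ℕ) : ℝ) ^ 2 * ((q w : ℤ) : ℝ) ≤ Rsq := by
            have h6 : ((q z : ℤ) : ℝ) = ((gc z : ℕ) : ℝ) ^ 2 * ((q w : ℤ) : ℝ) := by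
              exact_mod_cast congrArg (fun t : ℤ => (t : ℝ)) hqq
            linarith
          have h7 : ((gc z : ℕ) : ℝ) ^ 2 ≤ Rsq / ((q w : ℤ) : ℝ) := by
            rw [le_div_iff₀ hqwR]
            exact hgR
          have h8 : ((gc z : ℕ) : ℝ) ≤ Real.sqrt (Rsq / ((q w : ℤ) : ℝ)) := by
            rw [show ((gc z : ℕ) : ℝ) = Real.sqrt (((gc z : ℕ) : ℝ) ^ 2) from
              (Real.sqrt_sq (by positivity)).symm]
            exact Real.sqrt_le_sqrt h7
          rwa [Real.sqrt_div hRsq0.le] at h8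
        have hinjg : Set.InjOn gc (Zs.filter (fun z => prim z = w)) := by
          intro z hz1 z' hz2 hge
          rw [Finset.mem_coe, Finset.mem_filter] at hz1 hz2
          obtain ⟨hza, hzb⟩ := @prim_spec z
          obtain ⟨hza', hzb'⟩ := @prim_spec z'
          rw [hz1.2] at hza hzb
          rw [hz2.2] at hza' hzb'
          apply Prod.ext
          · rw [hza, hza', hge]
          · rw [hzb, hzb', hge]
        have h10 := Finset.card_le_card_of_injOn gc hsub hinjg
        rw [Nat.card_Icc] at h10
        have h11 : (((Zs.filter (fun z => prim z = w)).card : ℕ) : ℝ)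
            ≤ ((⌊Real.sqrt Rsq / Real.sqrt ((q w : ℤ) : ℝ)⌋₊ : ℕ) : ℝ) := by
          exact_mod_cast by omega
        exact le_trans h11 (Nat.floor_le (by positivity))
      calc (((Zs.filter (fun z => prim z = w)).card : ℕ) : ℝ) * (1 / Real.sqrt ((q w : ℤ) : ℝ))
          ≤ (Real.sqrt Rsq / Real.sqrt ((q w : ℤ) : ℝ)) * (1 / Real.sqrt ((q w : ℤ) : ℝ)) :=
            mul_le_mul_of_nonneg_right hcard (by positivity)
        _ = Real.sqrt Rsq * (((q w : ℤ) : ℝ))⁻¹ := by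
            rw [div_mul_div_comm, mul_one, Real.mul_self_sqrt hqwR.le, div_eq_mul_inv]
    -- step 5b : zeta bound
    have hWne : ∀ w ∈ Zs, w ≠ 0 := by
      intro w hw
      rw [hZdef, Finset.mem_filter] at hw
      exact hw.2.1
    have hS2 : ∑ w ∈ Zs, (((q w : ℤ) : ℝ))⁻¹ ≤ Rsq ^ (ε/6) * (8 * K) := by
      have h1 : ∀ w ∈ Zs, (((q w : ℤ) : ℝ))⁻¹
          ≤ Rsq ^ (ε/6) * ((q w : ℤ) : ℝ) ^ (-((2 + ε/3) / 2)) := by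
        intro w hw
        rw [hZdef, Finset.mem_filter] at hw
        obtain ⟨-, hw0, hwq⟩ := hw
        have hqw1 : (1:ℤ) ≤ q w := q_pos hw0
        have hqwR : (0:ℝ) < ((q w : ℤ) : ℝ) := by exact_mod_cast hqw1
        have e1 : (((q w : ℤ) : ℝ))⁻¹
            = ((q w : ℤ) : ℝ) ^ (ε/6) * ((q w : ℤ) : ℝ) ^ (-((2 + ε/3) / 2)) := by
          rw [← Real.rpow_add hqwR, show ε/6 + -((2 + ε/3)/2) = (-1 : ℝ) by ring,
            Real.rpow_neg_one]
        rw [e1]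
        exact mul_le_mul_of_nonneg_right
          (Real.rpow_le_rpow hqwR.le hwq (by linarith))
          (Real.rpow_nonneg hqwR.le _)
      calc ∑ w ∈ Zs, (((q w : ℤ) : ℝ))⁻¹
          ≤ ∑ w ∈ Zs, Rsq ^ (ε/6) * ((q w : ℤ) : ℝ) ^ (-((2 + ε/3) / 2)) :=
            Finset.sum_le_sum h1
        _ = Rsq ^ (ε/6) * ∑ w ∈ Zs, ((q w : ℤ) : ℝ) ^ (-((2 + ε/3) / 2)) := by
            rw [Finset.mul_sum]
        _ ≤ Rsq ^ (ε/6) * (8 * K) := by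
            apply mul_le_mul_of_nonneg_left _ (Real.rpow_nonneg hRsq0.le _)
            exact zeta_bound (ε/3) (by linarith) Zs hWne
    -- step 6 : cardinality of Zs
    have hZcard : ((Zs.card : ℕ) : ℝ) ≤ 9 * Rsq := by
      have hsqRsq1 : (1:ℝ) ≤ Real.sqrt Rsq := by
        rw [show (1:ℝ) = Real.sqrt 1 from (Real.sqrt_one).symm]
        exact Real.sqrt_le_sqrt hRsq1
      have hfl1 : (1:ℤ) ≤ ⌊Real.sqrt Rsq⌋ := by
        apply Int.le_floor.mpr
        push_cast
        exact hsqRsq1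
      have hsub : Zs ⊆ box ⌊Real.sqrt Rsq⌋ := by
        intro z hz
        rw [hZdef, Finset.mem_filter] at hz
        obtain ⟨-, hz0, hzq⟩ := hz
        rw [mem_box]
        have key : ∀ a : ℤ, a ^ 2 ≤ q z → |a| ≤ ⌊Real.sqrt Rsq⌋ := by
          intro a ha
          apply Int.le_floor.mpr
          have h1 : ((|a| : ℤ) : ℝ) ^ 2 ≤ Rsq := by
            have h2 : ((a : ℝ)) ^ 2 ≤ ((q z : ℤ) : ℝ) := by exact_mod_cast ha
            have h3 : ((|a| : ℤ) : ℝ) ^ 2 = ((a : ℝ)) ^ 2 := by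
              push_cast
              rw [sq_abs]
            linarith
          rw [show ((|a| : ℤ) : ℝ) = Real.sqrt (((|a| : ℤ) : ℝ) ^ 2) from
            (Real.sqrt_sq (by positivity)).symm]
          exact Real.sqrt_le_sqrt h1
        constructor
        · apply key
          rw [q]
          nlinarith [sq_nonneg z.2]
        · apply key
          rw [q]
          nlinarith [sq_nonneg z.1]
      have h1 : ((Zs.card : ℕ) : ℤ) ≤ ((box ⌊Real.sqrt Rsq⌋).card : ℤ) := by
        exact_mod_cast Finset.card_le_card hsub
      rw [box_card (by omega)] at h1
      have h2 : ((Zs.card : ℕ) : ℝ) ≤ ((2 * ⌊Real.sqrt Rsq⌋ + 1 : ℤ) : ℝ) ^ 2 := by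
        exact_mod_cast h1
      have h3 : ((⌊Real.sqrt Rsq⌋ : ℤ) : ℝ) ≤ Real.sqrt Rsq := Int.floor_le _
      have h4 : Real.sqrt Rsq * Real.sqrt Rsq = Rsq := Real.mul_self_sqrt hRsq0.le
      have h5 : ((2 * ⌊Real.sqrt Rsq⌋ + 1 : ℤ) : ℝ) = 2 * ((⌊Real.sqrt Rsq⌋ : ℤ) : ℝ) + 1 := by
        push_cast
        ring
      rw [h5] at h2
      have hflR : (1:ℝ) ≤ ((⌊Real.sqrt Rsq⌋ : ℤ) : ℝ) := by exact_mod_cast hfl1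
      have h6 : (2 * ((⌊Real.sqrt Rsq⌋ : ℤ) : ℝ) + 1) ^ 2 ≤ (2 * Real.sqrt Rsq + 1) ^ 2 := by
        nlinarith
      have h7 : (2 * Real.sqrt Rsq + 1) ^ 2 ≤ 9 * Rsq := by nlinarith
      linarith
    -- step 7 : put everything together
    have hfinal1 : (Bad.card : ℝ) ≤ 32 * K * (Real.sqrt N * (Real.sqrt Rsq * Rsq ^ (ε/6)))
        + 9 * Rsq := by
      have hc1 : (Bad.card : ℝ) ≤ (P.card : ℝ) := by exact_mod_cast hBadP
      have hsqN0 : (0:ℝ) ≤ Real.sqrt N := Real.sqrt_nonneg _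
      have hS1' : (∑ z ∈ Zs, 1 / Real.sqrt ((q (prim z) : ℤ) : ℝ))
          ≤ Real.sqrt Rsq * (Rsq ^ (ε/6) * (8 * K)) := by
        calc (∑ z ∈ Zs, 1 / Real.sqrt ((q (prim z) : ℤ) : ℝ))
            ≤ Real.sqrt Rsq * ∑ w ∈ Zs, (((q w : ℤ) : ℝ))⁻¹ := hS1
          _ ≤ Real.sqrt Rsq * (Rsq ^ (ε/6) * (8 * K)) :=
              mul_le_mul_of_nonneg_left hS2 (Real.sqrt_nonneg _)
      have h6 : 4 * Real.sqrt N * (∑ z ∈ Zs, 1 / Real.sqrt ((q (prim z) : ℤ) : ℝ))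
          ≤ 4 * Real.sqrt N * (Real.sqrt Rsq * (Rsq ^ (ε/6) * (8 * K))) :=
        mul_le_mul_of_nonneg_left hS1' (by positivity)
      have h7 : 4 * Real.sqrt N * (Real.sqrt Rsq * (Rsq ^ (ε/6) * (8 * K)))
          = 32 * K * (Real.sqrt N * (Real.sqrt Rsq * Rsq ^ (ε/6))) := by ring
      calc (Bad.card : ℝ) ≤ (P.card : ℝ) := hc1
        _ ≤ 4 * Real.sqrt N * (∑ z ∈ Zs, 1 / Real.sqrt ((q (prim z) : ℤ) : ℝ)) + Zs.card :=
            hsum1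
        _ ≤ 32 * K * (Real.sqrt N * (Real.sqrt Rsq * Rsq ^ (ε/6))) + 9 * Rsq := by
            rw [← h7]
            exact add_le_add h6 hZcard
    -- rpow arithmetic
    have hprod : Real.sqrt N * (Real.sqrt Rsq * Rsq ^ (ε/6)) ≤ (N:ℝ) ^ (1 - ε/3) := by
      rw [Real.sqrt_eq_rpow, hRsqdef, Real.sqrt_eq_rpow, ← Real.rpow_mul hN0.le,
        ← Real.rpow_mul hN0.le, ← Real.rpow_add hN0, ← Real.rpow_add hN0]
      apply Real.rpow_le_rpow_of_exponent_le hN1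
      nlinarith [sq_nonneg ε]
    have hRsqle : Rsq ≤ (N:ℝ) ^ (1 - ε/3) := by
      rw [hRsqdef]
      exact Real.rpow_le_rpow_of_exponent_le hN1 (by linarith)
    have hpow0 : (0:ℝ) ≤ (N:ℝ) ^ (1 - ε/3) := Real.rpow_nonneg hN0.le _
    calc (Bad.card : ℝ)
        ≤ 32 * K * (Real.sqrt N * (Real.sqrt Rsq * Rsq ^ (ε/6))) + 9 * Rsq := hfinal1
      _ ≤ 32 * K * ((N:ℝ) ^ (1 - ε/3)) + 9 * ((N:ℝ) ^ (1 - ε/3)) := by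
          have := mul_le_mul_of_nonneg_left hprod (by linarith : (0:ℝ) ≤ 32 * K)
          have := mul_le_mul_of_nonneg_left hRsqle (by norm_num : (0:ℝ) ≤ 9)
          linarith
      _ ≤ (32 * K + 10) * (N:ℝ) ^ (1 - ε/3) := by nlinarith
end

section
/- Let γ : [0, ℓ] → ℝ² be a C² arc-length parametrization (|γ'(t)| = 1) with κ < |γ''(t)| < 2κ for all t, where 2κℓ < 1. Let ξ ∈ ℝ², ξ ≠ 0, and 0 < ρ < 1/10 be such that |(ξ/|ξ|) · γ'(t)| > ρ for all t ∈ [0, ℓ]. Let ω : ℝ → ℝ≥0 be C¹ with support in [0, ℓ], ∫ω = 1 and ∫|ω'| ≤ c/ℓ. Then |∫ e(ξ·γ(t)) ω(t) dt| ≤ C/(ρ|ξ|) · (1/ℓ + κ/ρ), where e(t) = exp(2πit) and C depends only on c. -/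
open Set Real MeasureTheory
open scoped RealInnerProductSpace

set_option maxHeartbeats 1000000 in
/-- Non-stationary phase bound for a regular arc. -/
theorem stmt_7 (c : ℝ) (hc : 0 < c) :
    ∃ C : ℝ, 0 < C ∧
      ∀ (ℓ κ ρ : ℝ) (γ γ' γ'' : ℝ → EuclideanSpace ℝ (Fin 2))
        (ξ : EuclideanSpace ℝ (Fin 2)) (ω ω' : ℝ → ℝ),
        0 < ℓ → 0 < κ → 2 * κ * ℓ < 1 →
        (∀ t ∈ Icc 0 ℓ, HasDerivAt γ (γ' t) t) →
        (∀ t ∈ Icc 0 ℓ, HasDerivAt γ' (γ'' t) t) →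
        (∀ t ∈ Icc 0 ℓ, ‖γ' t‖ = 1) →
        (∀ t ∈ Icc 0 ℓ, κ < ‖γ'' t‖ ∧ ‖γ'' t‖ < 2 * κ) →
        ξ ≠ 0 → 0 < ρ → ρ < 1 / 10 →
        (∀ t ∈ Icc 0 ℓ, ρ < |⟪(‖ξ‖⁻¹ : ℝ) • ξ, γ' t⟫|) →
        (∀ t : ℝ, HasDerivAt ω (ω' t) t) →
        Continuous ω' →
        (∀ t, 0 ≤ ω t) →
        Function.support ω ⊆ Icc 0 ℓ →
        (∫ t : ℝ, ω t) = 1 →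
        (∫ t : ℝ, |ω' t|) ≤ c / ℓ →
        ‖∫ t : ℝ,
            Complex.exp (2 * Real.pi * Complex.I * (⟪ξ, γ t⟫ : ℝ)) * (ω t : ℂ)‖ ≤
          C / (ρ * ‖ξ‖) * (1 / ℓ + κ / ρ) := by
  refine ⟨c + 2, by positivity, ?_⟩
  intro ℓ κ ρ γ γ' γ'' ξ ω ω' hℓ hκ hκℓ hγ hγ' hunit hcurv hξ hρ hρ10 hphase hω hω'c hω0 hsupp
    hωint hω'int
  set n : ℝ := ‖ξ‖ with hn_def
  have hn : 0 < n := norm_pos_iff.mpr hξ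
  set φ : ℝ → ℝ := fun t => ⟪ξ, γ t⟫ with hφ_def
  set φd : ℝ → ℝ := fun t => ⟪ξ, γ' t⟫ with hφd_def
  set φdd : ℝ → ℝ := fun t => ⟪ξ, γ'' t⟫ with hφdd_def
  set F : ℝ → ℂ := fun t => Complex.exp (2 * Real.pi * Complex.I * (φ t : ℝ)) with hF_def
  set z : ℝ → ℂ := fun t => 2 * Real.pi * Complex.I * (φd t : ℝ) with hz_def
  set g : ℝ → ℂ := fun t => (ω t : ℂ) / z t with hg_def
  set g' : ℝ → ℂ := fun t =>
    ((ω' t : ℂ) * z t - (ω t : ℂ) * (2 * Real.pi * Complex.I * (φdd t : ℝ))) / z t ^ 2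
    with hg'_def
  have hIcc : uIcc (0:ℝ) ℓ = Icc 0 ℓ := uIcc_of_le hℓ.le
  have intCont : ∀ (f : ℝ → ℂ), ContinuousOn f (Icc 0 ℓ) → IntervalIntegrable f volume 0 ℓ :=
    fun f h => (h.mono hIcc.subset).intervalIntegrable
  have intContR : ∀ (f : ℝ → ℝ), ContinuousOn f (Icc 0 ℓ) → IntervalIntegrable f volume 0 ℓ :=
    fun f h => (h.mono hIcc.subset).intervalIntegrable
  -- derivative facts
  have hφD : ∀ t ∈ Icc (0:ℝ) ℓ, HasDerivAt φ (φd t) t := by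
    intro t ht
    have h := (hasDerivAt_const t ξ).inner ℝ (hγ t ht)
    simp only [inner_zero_left, add_zero] at h
    simpa only [hφ_def, hφd_def] using h
  have hφdD : ∀ t ∈ Icc (0:ℝ) ℓ, HasDerivAt φd (φdd t) t := by
    intro t ht
    have h := (hasDerivAt_const t ξ).inner ℝ (hγ' t ht)
    simp only [inner_zero_left, add_zero] at h
    simpa only [hφd_def, hφdd_def] using h
  -- lower bound on phase derivative
  have hlb : ∀ t ∈ Icc (0:ℝ) ℓ, ρ * n < |φd t| := by
    intro t ht
    have h := hphase t ht
    rw [real_inner_smul_left, abs_mul, abs_of_nonneg (inv_nonneg.mpr (norm_nonneg ξ))] at h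
    have h2 := mul_lt_mul_of_pos_right h hn
    calc ρ * n < n⁻¹ * |⟪ξ, γ' t⟫| * n := h2
      _ = |φd t| := by rw [hφd_def]; field_simp
  have hρn : 0 < ρ * n := mul_pos hρ hn
  have hφd0 : ∀ t ∈ Icc (0:ℝ) ℓ, φd t ≠ 0 := by
    intro t ht h
    have := hlb t ht
    rw [h, abs_zero] at this; linarith
  have hz0 : ∀ t ∈ Icc (0:ℝ) ℓ, z t ≠ 0 := by
    intro t ht
    rw [hz_def]
    refine mul_ne_zero (mul_ne_zero (mul_ne_zero ?_ ?_) Complex.I_ne_zero)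
      (Complex.ofReal_ne_zero.mpr (hφd0 t ht))
    · norm_num
    · exact Complex.ofReal_ne_zero.mpr Real.pi_ne_zero
  -- upper bound on second phase derivative
  have hub : ∀ t ∈ Icc (0:ℝ) ℓ, |φdd t| ≤ n * (2 * κ) := by
    intro t ht
    calc |φdd t| ≤ ‖ξ‖ * ‖γ'' t‖ := abs_real_inner_le_norm ξ (γ'' t)
      _ ≤ n * (2 * κ) := mul_le_mul_of_nonneg_left (hcurv t ht).2.le (norm_nonneg ξ)
  -- norm computations
  have hznorm : ∀ r : ℝ, ‖(2 * Real.pi * Complex.I * (r : ℝ) : ℂ)‖ = 2 * Real.pi * |r| := by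
    intro r
    rw [norm_mul, norm_mul, norm_mul]
    simp [Real.pi_pos.le, abs_of_nonneg, Real.norm_eq_abs]
  have hznormlb : ∀ t ∈ Icc (0:ℝ) ℓ, 2 * Real.pi * (ρ * n) ≤ ‖z t‖ := by
    intro t ht
    rw [hz_def, hznorm]
    have := hlb t ht
    nlinarith [Real.pi_pos]
  have hzpos : (0:ℝ) < 2 * Real.pi * (ρ * n) := by positivity
  have hFnorm : ∀ t, ‖F t‖ = 1 := by
    intro t
    rw [hF_def, Complex.norm_exp]
    norm_num [Complex.mul_re, Complex.mul_im]
  -- derivative of F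
  have hzD : ∀ t ∈ Icc (0:ℝ) ℓ, HasDerivAt z (2 * Real.pi * Complex.I * (φdd t : ℝ)) t := by
    intro t ht
    rw [hz_def]
    exact ((hφdD t ht).ofReal_comp).const_mul (2 * Real.pi * Complex.I)
  have hFD : ∀ t ∈ Icc (0:ℝ) ℓ, HasDerivAt F (F t * z t) t := by
    intro t ht
    have h1 : HasDerivAt (fun s => (2 * Real.pi * Complex.I * (φ s : ℝ) : ℂ))
        (2 * Real.pi * Complex.I * (φd t : ℝ)) t :=
      ((hφD t ht).ofReal_comp).const_mul (2 * Real.pi * Complex.I)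
    rw [hF_def, hz_def]
    exact h1.cexp
  -- derivative of g
  have hgD : ∀ t ∈ Icc (0:ℝ) ℓ, HasDerivAt g (g' t) t := by
    intro t ht
    rw [hg_def, hg'_def]
    exact HasDerivAt.div ((hω t).ofReal_comp) (hzD t ht) (hz0 t ht)
  -- support of ω vanishing
  have hzω : ∀ x, x ∉ Icc (0:ℝ) ℓ → ω x = 0 := fun x hx =>
    Function.notMem_support.mp (fun h => hx (hsupp h))
  have hzω' : ∀ x, x ∉ Icc (0:ℝ) ℓ → ω' x = 0 := by
    intro x hx
    have hnb : (Icc (0:ℝ) ℓ)ᶜ ∈ nhds x := isClosed_Icc.isOpen_compl.mem_nhds hx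
    have hev : ω =ᶠ[nhds x] fun _ => (0:ℝ) := by
      filter_upwards [hnb] with y hy
      exact hzω y hy
    have h0 : HasDerivAt ω 0 x := (hasDerivAt_const x (0:ℝ)).congr_of_eventuallyEq hev
    exact (hω x).unique h0
  have cω : Continuous ω := by
    rw [continuous_iff_continuousAt]; exact fun t => (hω t).continuousAt
  have hω0val : ω 0 = 0 := by
    have h1 : Filter.Tendsto ω (nhdsWithin 0 (Iio 0)) (nhds (ω 0)) :=
      (cω.tendsto 0).mono_left nhdsWithin_le_nhds
    have h2 : Filter.Tendsto ω (nhdsWithin 0 (Iio 0)) (nhds 0) := by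
      apply Filter.Tendsto.congr' _ tendsto_const_nhds
      filter_upwards [self_mem_nhdsWithin] with x hx
      exact (hzω x (fun h => absurd h.1 (not_le.mpr hx))).symm
    exact tendsto_nhds_unique h1 h2
  have hωℓval : ω ℓ = 0 := by
    have h1 : Filter.Tendsto ω (nhdsWithin ℓ (Ioi ℓ)) (nhds (ω ℓ)) :=
      (cω.tendsto ℓ).mono_left nhdsWithin_le_nhds
    have h2 : Filter.Tendsto ω (nhdsWithin ℓ (Ioi ℓ)) (nhds 0) := by
      apply Filter.Tendsto.congr' _ tendsto_const_nhds
      filter_upwards [self_mem_nhdsWithin] with x hx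
      exact (hzω x (fun h => absurd h.2 (not_le.mpr hx))).symm
    exact tendsto_nhds_unique h1 h2
  -- continuity facts on Icc
  have cφ : ContinuousOn φ (Icc 0 ℓ) := fun t ht => ((hφD t ht).continuousAt).continuousWithinAt
  have cφd : ContinuousOn φd (Icc 0 ℓ) := fun t ht => ((hφdD t ht).continuousAt).continuousWithinAt
  have cF : ContinuousOn F (Icc 0 ℓ) := fun t ht => ((hFD t ht).continuousAt).continuousWithinAt
  have cz : ContinuousOn z (Icc 0 ℓ) := fun t ht => ((hzD t ht).continuousAt).continuousWithinAt
  have cg : ContinuousOn g (Icc 0 ℓ) := fun t ht => ((hgD t ht).continuousAt).continuousWithinAt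
  -- bound on ω
  obtain ⟨M, hM⟩ : ∃ M, ∀ t ∈ Icc (0:ℝ) ℓ, ‖ω t‖ ≤ M :=
    isCompact_Icc.exists_bound_of_continuousOn cω.continuousOn
  -- integrability of g'
  have hig' : IntervalIntegrable g' volume 0 ℓ := by
    have hsplitfun : g' = fun t =>
        (ω' t : ℂ) * z t / z t ^ 2 +
          -((ω t : ℂ) * (2 * Real.pi * Complex.I * (φdd t : ℝ)) / z t ^ 2) := by
      funext t
      rw [hg'_def]
      ring
    rw [hsplitfun]
    refine IntervalIntegrable.add ?_ ?_
    · refine intCont _ ?_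
      exact (((Complex.continuous_ofReal.comp hω'c).continuousOn).mul cz).div
        (cz.pow 2) (fun t ht => pow_ne_zero 2 (hz0 t ht))
    · -- the second-derivative term: measurable and bounded
      rw [intervalIntegrable_iff_integrableOn_Ioc_of_le hℓ.le]
      set Q : ℝ → ℂ := fun t =>
        -((ω t : ℂ) * (2 * Real.pi * Complex.I * (φdd t : ℝ)) / z t ^ 2) with hQ_def
      set Qm : ℝ → ℂ := fun t =>
        -((ω t : ℂ) * (2 * Real.pi * Complex.I * ((⟪ξ, deriv γ' t⟫ : ℝ) : ℂ)) / z t ^ 2)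
        with hQm_def
      have haeq : Q =ᵐ[volume.restrict (Ioc 0 ℓ)] Qm := by
        have h1 : ∀ᵐ t ∂(volume.restrict (Ioc 0 ℓ)), t ≠ ℓ := by
          refine ae_restrict_of_ae ?_
          have : volume ({ℓ} : Set ℝ) = 0 := measure_singleton ℓ
          exact measure_eq_zero_iff_ae_notMem.mp this
        filter_upwards [h1, ae_restrict_mem measurableSet_Ioc] with t ht1 ht2
        have htoo : t ∈ Ioo 0 ℓ := ⟨ht2.1, lt_of_le_of_ne ht2.2 ht1⟩
        have : deriv γ' t = γ'' t := (hγ' t (Ioo_subset_Icc_self htoo)).deriv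
        simp only [hQ_def, hQm_def, this, hφdd_def]
      have hzaem : AEMeasurable z (volume.restrict (Ioc 0 ℓ)) :=
        (cz.aemeasurable measurableSet_Icc).mono_measure
          (Measure.restrict_mono Ioc_subset_Icc_self le_rfl)
      have hmm : Measurable fun t => (⟪ξ, deriv γ' t⟫ : ℝ) :=
        measurable_const.inner (measurable_deriv γ')
      have hQmaem : AEMeasurable Qm (volume.restrict (Ioc 0 ℓ)) := by
        rw [hQm_def]
        refine AEMeasurable.neg ?_
        refine AEMeasurable.div ?_ ((hzaem.pow_const 2))
        exact ((Complex.measurable_ofReal.comp cω.measurable).aemeasurable).mul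
          ((measurable_const.mul (Complex.measurable_ofReal.comp hmm)).aemeasurable)
      have hQaesm : AEStronglyMeasurable Q (volume.restrict (Ioc 0 ℓ)) :=
        (hQmaem.congr haeq.symm).aestronglyMeasurable
      refine Integrable.mono' (integrable_const
        (M * (2 * Real.pi * (n * (2 * κ))) / (2 * Real.pi * (ρ * n)) ^ 2)) hQaesm ?_
      filter_upwards [ae_restrict_mem measurableSet_Ioc] with t ht
      have htIcc : t ∈ Icc 0 ℓ := Ioc_subset_Icc_self ht
      rw [hQ_def]
      rw [norm_neg, norm_div, norm_mul, norm_pow, hznorm, Complex.norm_real, Real.norm_eq_abs]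
      have hMt := hM t htIcc
      rw [Real.norm_eq_abs] at hMt
      have hM0 : (0:ℝ) ≤ M := (abs_nonneg _).trans hMt
      have h1 : |ω t| * (2 * Real.pi * |φdd t|) ≤ M * (2 * Real.pi * (n * (2 * κ))) := by
        have h3 := hub t htIcc
        have h4 : 2 * Real.pi * |φdd t| ≤ 2 * Real.pi * (n * (2 * κ)) := by
          nlinarith [Real.pi_pos]
        exact mul_le_mul hMt h4 (by positivity) hM0
      have h2 : (2 * Real.pi * (ρ * n)) ^ 2 ≤ ‖z t‖ ^ 2 := by
        nlinarith [hznormlb t htIcc, hzpos]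
      exact div_le_div₀ (by positivity) h1 (by positivity) h2
  -- remaining integrability
  have hiF' : IntervalIntegrable (fun t => F t * z t) volume 0 ℓ := intCont _ (cF.mul cz)
  have hiF'g : IntervalIntegrable (fun t => F t * z t * g t) volume 0 ℓ :=
    intCont _ ((cF.mul cz).mul cg)
  have hiFg' : IntervalIntegrable (fun t => F t * g' t) volume 0 ℓ :=
    hig'.continuousOn_mul (cF.mono hIcc.subset)
  -- integration by parts
  have hIBP : (∫ t in (0:ℝ)..ℓ, (F t * z t) * g t + F t * g' t) = F ℓ * g ℓ - F 0 * g 0 :=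
    intervalIntegral.integral_deriv_mul_eq_sub (u := F) (v := g)
      (fun t ht => hFD t (hIcc.subset ht)) (fun t ht => hgD t (hIcc.subset ht)) hiF' hig'
  have hbdry : F ℓ * g ℓ - F 0 * g 0 = 0 := by
    rw [hg_def]
    simp [hω0val, hωℓval]
  have hptws : ∀ t ∈ Icc (0:ℝ) ℓ, F t * z t * g t = F t * (ω t : ℂ) := by
    intro t ht
    rw [hg_def]
    have := hz0 t ht
    field_simp
  have hkey : (∫ t in (0:ℝ)..ℓ, F t * (ω t : ℂ)) = - ∫ t in (0:ℝ)..ℓ, F t * g' t := by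
    have hsplit := hIBP
    rw [intervalIntegral.integral_add hiF'g hiFg', hbdry] at hsplit
    have hcongr : (∫ t in (0:ℝ)..ℓ, F t * z t * g t) = ∫ t in (0:ℝ)..ℓ, F t * (ω t : ℂ) :=
      intervalIntegral.integral_congr (fun t ht => hptws t (hIcc.subset ht))
    rw [hcongr] at hsplit
    exact eq_neg_of_add_eq_zero_left hsplit
  -- transfer the integral over ℝ to the interval integral
  have hInt1 : (∫ t : ℝ, F t * (ω t : ℂ)) = ∫ t in (0:ℝ)..ℓ, F t * (ω t : ℂ) := by
    rw [intervalIntegral.integral_of_le hℓ.le, ← integral_Icc_eq_integral_Ioc]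
    exact (setIntegral_eq_integral_of_forall_compl_eq_zero
      (fun x hx => by rw [hzω x hx]; simp)).symm
  -- pointwise bound for the final integrand
  set b : ℝ → ℝ := fun t => |ω' t| * (2 * Real.pi * (ρ * n))⁻¹ +
      ω t * (2 * Real.pi * (n * (2 * κ)) * ((2 * Real.pi * (ρ * n)) ^ 2)⁻¹) with hb_def
  have hbpt : ∀ t ∈ Icc (0:ℝ) ℓ, ‖F t * g' t‖ ≤ b t := by
    intro t ht
    rw [norm_mul, hFnorm, one_mul, hg'_def, hb_def]
    rw [norm_div, norm_pow]
    have hZ := hznormlb t ht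
    have hZpos : (0:ℝ) < ‖z t‖ := lt_of_lt_of_le hzpos hZ
    have hnum : ‖(ω' t : ℂ) * z t - (ω t : ℂ) * (2 * Real.pi * Complex.I * (φdd t : ℝ))‖ ≤
        |ω' t| * ‖z t‖ + ω t * (2 * Real.pi * (n * (2 * κ))) := by
      refine (norm_sub_le _ _).trans ?_
      have e1 : ‖(ω' t : ℂ) * z t‖ = |ω' t| * ‖z t‖ := by
        rw [norm_mul, Complex.norm_real, Real.norm_eq_abs]
      have e2 : ‖(ω t : ℂ) * (2 * Real.pi * Complex.I * (φdd t : ℝ))‖ =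
          ω t * (2 * Real.pi * |φdd t|) := by
        rw [norm_mul, hznorm, Complex.norm_real, Real.norm_eq_abs, abs_of_nonneg (hω0 t)]
      rw [e1, e2]
      have h3 := hub t ht
      have h4 : 2 * Real.pi * |φdd t| ≤ 2 * Real.pi * (n * (2 * κ)) := by
        nlinarith [Real.pi_pos]
      nlinarith [hω0 t, abs_nonneg (ω' t)]
    calc ‖(ω' t : ℂ) * z t - (ω t : ℂ) * (2 * Real.pi * Complex.I * (φdd t : ℝ))‖ / ‖z t‖ ^ 2
        ≤ (|ω' t| * ‖z t‖ + ω t * (2 * Real.pi * (n * (2 * κ)))) / ‖z t‖ ^ 2 :=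
          div_le_div_of_nonneg_right hnum (by positivity)
      _ = |ω' t| / ‖z t‖ + ω t * (2 * Real.pi * (n * (2 * κ))) / ‖z t‖ ^ 2 := by
          rw [add_div, sq, mul_div_mul_right _ _ (ne_of_gt hZpos)]
      _ ≤ |ω' t| * (2 * Real.pi * (ρ * n))⁻¹ +
          ω t * (2 * Real.pi * (n * (2 * κ)) * ((2 * Real.pi * (ρ * n)) ^ 2)⁻¹) := by
          have t1 : |ω' t| / ‖z t‖ ≤ |ω' t| * (2 * Real.pi * (ρ * n))⁻¹ := by
            rw [div_eq_mul_inv]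
            exact mul_le_mul_of_nonneg_left (by
              exact inv_anti₀ hzpos hZ) (abs_nonneg _)
          have t2 : ω t * (2 * Real.pi * (n * (2 * κ))) / ‖z t‖ ^ 2 ≤
              ω t * (2 * Real.pi * (n * (2 * κ)) * ((2 * Real.pi * (ρ * n)) ^ 2)⁻¹) := by
            rw [div_eq_mul_inv, mul_assoc]
            refine mul_le_mul_of_nonneg_left ?_ (hω0 t)
            refine mul_le_mul_of_nonneg_left ?_ (by positivity)
            refine inv_anti₀ (by positivity) ?_
            nlinarith [hZ, hzpos]
          linarith
  -- integral of |ω'| and ω on the interval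
  have hsuppω' : HasCompactSupport ω' := HasCompactSupport.intro isCompact_Icc hzω'
  have hintω' : Integrable ω' := hω'c.integrable_of_hasCompactSupport hsuppω'
  have hIω' : (∫ t in (0:ℝ)..ℓ, |ω' t|) ≤ c / ℓ := by
    rw [intervalIntegral.integral_of_le hℓ.le]
    calc (∫ t in Ioc (0:ℝ) ℓ, |ω' t|) ≤ ∫ t : ℝ, |ω' t| :=
        setIntegral_le_integral hintω'.abs (Filter.Eventually.of_forall fun x => abs_nonneg _)
      _ ≤ c / ℓ := hω'int
  have hIω : (∫ t in (0:ℝ)..ℓ, ω t) = 1 := by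
    rw [intervalIntegral.integral_of_le hℓ.le, ← integral_Icc_eq_integral_Ioc,
      setIntegral_eq_integral_of_forall_compl_eq_zero (fun x hx => hzω x hx)]
    exact hωint
  have hIω'0 : (0:ℝ) ≤ ∫ t in (0:ℝ)..ℓ, |ω' t| :=
    intervalIntegral.integral_nonneg hℓ.le (fun t _ => abs_nonneg _)
  -- integrate the bound
  have hib1 : IntervalIntegrable (fun t => |ω' t|) volume 0 ℓ := intContR _ hω'c.abs.continuousOn
  have hib2 : IntervalIntegrable ω volume 0 ℓ := intContR _ cω.continuousOn
  have hbint : IntervalIntegrable b volume 0 ℓ := by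
    rw [hb_def]
    exact (hib1.mul_const _).add (hib2.mul_const _)
  have hbI : (∫ t in (0:ℝ)..ℓ, b t) ≤
      c / ℓ * (2 * Real.pi * (ρ * n))⁻¹ +
        2 * Real.pi * (n * (2 * κ)) * ((2 * Real.pi * (ρ * n)) ^ 2)⁻¹ := by
    rw [hb_def]
    rw [intervalIntegral.integral_add (hib1.mul_const _) (hib2.mul_const _),
      intervalIntegral.integral_mul_const, intervalIntegral.integral_mul_const, hIω, one_mul]
    have : (∫ t in (0:ℝ)..ℓ, |ω' t|) * (2 * Real.pi * (ρ * n))⁻¹ ≤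
        c / ℓ * (2 * Real.pi * (ρ * n))⁻¹ :=
      mul_le_mul_of_nonneg_right hIω' (by positivity)
    linarith
  -- main norm estimate
  have hmain : ‖∫ t : ℝ, F t * (ω t : ℂ)‖ ≤
      c / ℓ * (2 * Real.pi * (ρ * n))⁻¹ +
        2 * Real.pi * (n * (2 * κ)) * ((2 * Real.pi * (ρ * n)) ^ 2)⁻¹ := by
    rw [hInt1, hkey, norm_neg]
    calc ‖∫ t in (0:ℝ)..ℓ, F t * g' t‖ ≤ ∫ t in (0:ℝ)..ℓ, ‖F t * g' t‖ :=
        intervalIntegral.norm_integral_le_integral_norm hℓ.le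
      _ ≤ ∫ t in (0:ℝ)..ℓ, b t := by
          refine intervalIntegral.integral_mono_on hℓ.le hiFg'.norm hbint ?_
          exact fun t ht => hbpt t ht
      _ ≤ _ := hbI
  -- final arithmetic
  have harith : c / ℓ * (2 * Real.pi * (ρ * n))⁻¹ +
      2 * Real.pi * (n * (2 * κ)) * ((2 * Real.pi * (ρ * n)) ^ 2)⁻¹ ≤
      (c + 2) / (ρ * n) * (1 / ℓ + κ / ρ) := by
    have hπ := Real.pi_gt_three
    have hℓ0 : ℓ ≠ 0 := ne_of_gt hℓ
    have hρn0 : ρ * n ≠ 0 := ne_of_gt hρn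
    have hρ0 : ρ ≠ 0 := ne_of_gt hρ
    have hn0 : n ≠ 0 := ne_of_gt hn
    have hπ0 : Real.pi ≠ 0 := Real.pi_ne_zero
    have hP : (0:ℝ) < ρ * n * ℓ := by positivity
    have hP2 : (0:ℝ) < ρ ^ 2 * n := by positivity
    have e1 : c / ℓ * (2 * Real.pi * (ρ * n))⁻¹ ≤ (c + 2) / (ρ * n) * (1 / ℓ) := by
      have l1 : c / ℓ * (2 * Real.pi * (ρ * n))⁻¹ = c / (2 * Real.pi * (ρ * n * ℓ)) := by
        field_simp
        try tauto
      have r1 : (c + 2) / (ρ * n) * (1 / ℓ) = (c + 2) / (ρ * n * ℓ) := by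
        field_simp
      rw [l1, r1, div_le_div_iff₀ (by positivity) (by positivity)]
      nlinarith [mul_nonneg hP.le (by linarith : (0:ℝ) ≤ 2 * Real.pi - 1),
        mul_nonneg (mul_nonneg hc.le hP.le) (by linarith : (0:ℝ) ≤ 2 * Real.pi - 1)]
    have e2 : 2 * Real.pi * (n * (2 * κ)) * ((2 * Real.pi * (ρ * n)) ^ 2)⁻¹ ≤
        (c + 2) / (ρ * n) * (κ / ρ) := by
      have l2 : 2 * Real.pi * (n * (2 * κ)) * ((2 * Real.pi * (ρ * n)) ^ 2)⁻¹ =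
          κ / (Real.pi * (ρ ^ 2 * n)) := by
        field_simp
      have r2 : (c + 2) / (ρ * n) * (κ / ρ) = (c + 2) * κ / (ρ ^ 2 * n) := by
        field_simp
      rw [l2, r2, div_le_div_iff₀ (by positivity) (by positivity)]
      nlinarith [mul_nonneg (mul_nonneg hc.le Real.pi_pos.le) (mul_pos hκ hP2).le,
        mul_nonneg (by linarith : (0:ℝ) ≤ Real.pi - 3) (mul_pos hκ hP2).le]
    calc c / ℓ * (2 * Real.pi * (ρ * n))⁻¹ +
        2 * Real.pi * (n * (2 * κ)) * ((2 * Real.pi * (ρ * n)) ^ 2)⁻¹ ≤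
        (c + 2) / (ρ * n) * (1 / ℓ) + (c + 2) / (ρ * n) * (κ / ρ) := add_le_add e1 e2
      _ = (c + 2) / (ρ * n) * (1 / ℓ + κ / ρ) := by ring
  -- conclude
  have hgoal : (∫ t : ℝ, Complex.exp (2 * Real.pi * Complex.I * ((⟪ξ, γ t⟫ : ℝ) : ℂ)) *
      (ω t : ℂ)) = ∫ t : ℝ, F t * (ω t : ℂ) := by
    simp only [hF_def, hφ_def]
  rw [hgoal]
  exact hmain.trans harith
end

section
/- If P₀, P₁, P₂ are three distinct points of ℤ² on the circle {|x| = λ}, then |P₀−P₁| · |P₁−P₂| · |P₂−P₀| ≥ λ. -/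
/-- Jarnik-type bound: three distinct lattice points on the circle of radius `λ`
satisfy `|P₀−P₁| · |P₁−P₂| · |P₂−P₀| ≥ λ`. -/
theorem stmt_13 (lam : ℝ) (hlam : 0 < lam) (P₀ P₁ P₂ : ℤ × ℤ)
    (h0 : ‖toC P₀‖ = lam)
    (h1 : ‖toC P₁‖ = lam)
    (h2 : ‖toC P₂‖ = lam)
    (hne01 : P₀ ≠ P₁) (hne02 : P₀ ≠ P₂) (hne12 : P₁ ≠ P₂) :
    lam ≤ ‖toC P₀ - toC P₁‖ * ‖toC P₁ - toC P₂‖ *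
      ‖toC P₂ - toC P₀‖ := by
  have hinj : ∀ P Q : ℤ × ℤ, toC P = toC Q → P = Q := by
    intro P Q h
    simp only [toC, Complex.ext_iff, Complex.add_re, Complex.add_im, Complex.mul_re,
      Complex.mul_im, Complex.I_re, Complex.I_im, Complex.intCast_re, Complex.intCast_im] at h
    obtain ⟨hr, hi⟩ := h
    refine Prod.ext ?_ ?_ <;> [skip; skip]
    · exact_mod_cast (by linarith : (P.1:ℝ) = Q.1)
    · exact_mod_cast (by linarith : (P.2:ℝ) = Q.2)
  have key : ∀ P : ℤ × ℤ, ‖toC P‖ = lam →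
      toC P * ((P.1:ℂ) - (P.2:ℂ) * Complex.I) = (lam:ℂ)^2 := by
    intro P hP
    have hc : (starRingEnd ℂ) (toC P) = (P.1:ℂ) - (P.2:ℂ) * Complex.I := by
      simp [toC, Complex.conj_I]; ring
    have := Complex.mul_conj (toC P)
    rw [hc] at this
    rw [this, ← Complex.sq_norm, hP]
    push_cast
    ring
  set z0 := toC P₀ with hz0
  set z1 := toC P₁ with hz1
  set z2 := toC P₂ with hz2
  have k0 := key P₀ h0
  have k1 := key P₁ h1
  have k2 := key P₂ h2
  set c0 : ℂ := (P₀.1:ℂ) - (P₀.2:ℂ) * Complex.I with hc0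
  set c1 : ℂ := (P₁.1:ℂ) - (P₁.2:ℂ) * Complex.I with hc1
  set c2 : ℂ := (P₂.1:ℂ) - (P₂.2:ℂ) * Complex.I with hc2
  set w : ℂ := z0*(c2 - c1) - z1*c2 + z2*c1 + c0*(z1 - z2) with hw
  have hiden : z0 * z1 * z2 * w = -((lam:ℂ)^2 * ((z0 - z1) * (z1 - z2) * (z2 - z0))) := by
    rw [hw]
    linear_combination (z1^2*z2 - z1*z2^2) * k0 + (z0*z2^2 - z0^2*z2) * k1 +
      (z0^2*z1 - z0*z1^2) * k2
  have hd0 : (z0 - z1) * (z1 - z2) * (z2 - z0) ≠ 0 := by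
    refine mul_ne_zero (mul_ne_zero ?_ ?_) ?_ <;>
      [exact sub_ne_zero.mpr (fun h => hne01 (hinj _ _ h));
       exact sub_ne_zero.mpr (fun h => hne12 (hinj _ _ h));
       exact sub_ne_zero.mpr (fun h => hne02 (hinj _ _ h).symm)]
  have hlamC : ((lam:ℂ))^2 ≠ 0 := by
    simp [pow_ne_zero, Complex.ofReal_ne_zero, hlam.ne']
  have hwne : w ≠ 0 := by
    intro h
    rw [h, mul_zero] at hiden
    exact hd0 (by
      have := hiden.symm
      rcases mul_eq_zero.mp (neg_eq_zero.mp this) with h' | h'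
      · exact absurd h' hlamC
      · exact h')
  -- w is a Gaussian integer
  set M : ℤ := (P₀.1*P₂.1 + P₀.2*P₂.2) - (P₀.1*P₁.1 + P₀.2*P₁.2)
      - (P₁.1*P₂.1 + P₁.2*P₂.2) + (P₂.1*P₁.1 + P₂.2*P₁.2)
      + (P₁.1*P₀.1 + P₁.2*P₀.2) - (P₂.1*P₀.1 + P₂.2*P₀.2) with hM
  set N : ℤ := (P₀.2*P₂.1 - P₀.1*P₂.2) - (P₀.2*P₁.1 - P₀.1*P₁.2)
      - (P₁.2*P₂.1 - P₁.1*P₂.2) + (P₂.2*P₁.1 - P₂.1*P₁.2)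
      + (P₁.2*P₀.1 - P₁.1*P₀.2) - (P₂.2*P₀.1 - P₂.1*P₀.2) with hN
  have hwMN : w = (M:ℂ) + (N:ℂ) * Complex.I := by
    rw [hw, hc0, hc1, hc2, hz0, hz1, hz2, hM, hN]
    simp only [toC]
    push_cast
    ring_nf
  have hMN : (1:ℤ) ≤ M^2 + N^2 := by
    rcases eq_or_ne M 0 with hM0 | hM0
    · rcases eq_or_ne N 0 with hN0 | hN0
      · exact absurd (by rw [hwMN, hM0, hN0]; simp) hwne
      · nlinarith [sq_nonneg M, Int.one_le_abs hN0, sq_abs N, sq_nonneg (|N| - 1)]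
    · nlinarith [sq_nonneg N, Int.one_le_abs hM0, sq_abs M, sq_nonneg (|M| - 1)]
  have habsw : 1 ≤ ‖w‖ := by
    have hsq : (‖w‖)^2 = (M:ℝ)^2 + (N:ℝ)^2 := by
      rw [hwMN, Complex.sq_norm]
      rw [show ((M:ℂ) + (N:ℂ)*Complex.I) = Complex.mk (M:ℝ) (N:ℝ) by
        simp [Complex.ext_iff]]
      simp [Complex.normSq_mk]
      ring
    have : (1:ℝ) ≤ (M:ℝ)^2 + (N:ℝ)^2 := by exact_mod_cast hMN
    nlinarith [norm_nonneg w]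
  -- take absolute values
  have habs := congrArg (‖·‖) hiden
  simp only [norm_mul, norm_neg] at habs
  rw [h0, h1, h2] at habs
  have hlp : ‖(lam:ℂ)^2‖ = lam^2 := by
    rw [norm_pow, Complex.norm_real, Real.norm_eq_abs, abs_of_pos hlam]
  rw [hlp] at habs
  -- habs : lam * lam * lam * abs w = lam^2 * (abs(z0-z1)*abs(z1-z2)*abs(z2-z0))
  have hz01 : ‖z0 - z1‖ * ‖z1 - z2‖ * ‖z2 - z0‖
      = lam * ‖w‖ := by
    have h3 : lam^2 * (‖z0 - z1‖ * ‖z1 - z2‖ * ‖z2 - z0‖)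
        = lam^2 * (lam * ‖w‖) := by
      rw [← habs]; ring
    exact mul_left_cancel₀ (by positivity) h3
  rw [hz01]
  nlinarith
end
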